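/- arXiv:1403.4085 — 2 statements merged into one kernel-verified Lean document; each statement's English description precedes it below -/
import Mathlib

section
/- Let d ≥ 1, 1 < p < ∞, 1 < q ≤ ∞, and let Z = {N_1 < N_2 < …} ⊂ ℕ be an increasing sequence. Let (K_N)_{N∈ℕ} be kernels in ℓ¹(ℤ^d) and suppose that ‖ ∑_{N_k ≤ N ≤ N_{k+1}} ‖K_{N+1} − K_N‖_{ℓ¹(ℤ^d)} ‖_{ℓ^{min(p,q)}_k} < ∞. Then there is a constant C = C(p, q, and the above ℓ^{min(p,q)} norm) such that for all f ∈ ℓ^p(ℤ^d): ‖ ( ∑_j ‖K_N * f‖_{V^q_{N∈[N_j, N_{j+1}]}}^q )^{1/q} ‖_{ℓ^p(ℤ^d)} ≤ C ‖f‖_{ℓ^p(ℤ^d)}, i.e. the short q-variation of N ↦ K_N * f with respect to Z is bounded on ℓ^p. -/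
open MeasureTheory ENNReal
open scoped NNReal

/-- The homogeneous `q`-variation norm for an exponent `q ∈ (1, ∞]`; for `q = ∞` it is the
supremum of `‖u t - u s‖` over `s < t`. -/
noncomputable def hVarE {ι : Type*} [LinearOrder ι] {E : Type*} [NormedAddCommGroup E]
    (q : ℝ≥0∞) (u : ι → E) : ℝ≥0∞ :=
  if q = ⊤ then ⨆ (s : ι) (t : ι) (_ : s < t), (‖u t - u s‖₊ : ℝ≥0∞)
  else ⨆ (J : ℕ) (t : Fin (J + 1) → ι) (_ : StrictMono t),
    (∑ j : Fin J, (‖u (t j.succ) - u (t j.castSucc)‖₊ : ℝ≥0∞) ^ q.toReal) ^ (1 / q.toReal)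

/-- The short `q`-variation of `u : ℕ → E` with respect to the increasing sequence
`Nseq : ℕ → ℕ`, i.e. `(∑_j ‖u‖_{V^q([N_j, N_{j+1}])}^q)^{1/q}` (with the obvious
modification for `q = ∞`). -/
noncomputable def sVarE {E : Type*} [NormedAddCommGroup E]
    (q : ℝ≥0∞) (Nseq : ℕ → ℕ) (u : ℕ → E) : ℝ≥0∞ :=
  if q = ⊤ then
    ⨆ j : ℕ, hVarE ⊤ (fun n : {n : ℕ // n ∈ Set.Icc (Nseq j) (Nseq (j + 1))} => u n)
  else
    (∑' j : ℕ,
      hVarE q (fun n : {n : ℕ // n ∈ Set.Icc (Nseq j) (Nseq (j + 1))} => u n) ^ q.toReal)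
      ^ (1 / q.toReal)

lemma aux_sum_rpow_le {ι : Type*} (F : Finset ι) (a : ι → ℝ≥0∞) {r : ℝ} (hr : 1 ≤ r) :
    ∑ i ∈ F, a i ^ r ≤ (∑ i ∈ F, a i) ^ r := by
  induction F using Finset.cons_induction with
  | empty => simp [ENNReal.zero_rpow_of_pos (by linarith : (0:ℝ) < r)]
  | cons i F hi ih =>
    rw [Finset.sum_cons, Finset.sum_cons]
    exact le_trans (add_le_add le_rfl ih) (ENNReal.add_rpow_le_rpow_add _ _ hr)

lemma aux_rpow_iSup {ι : Type*} (c : ι → ℝ≥0∞) {s : ℝ} (hs : 0 < s) :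
    (⨆ i, c i) ^ s = ⨆ i, c i ^ s := by
  apply le_antisymm
  · rcases isEmpty_or_nonempty ι with h | h
    · simp [iSup_of_empty, ENNReal.zero_rpow_of_pos hs]
    · have h1 : ∀ i, c i ≤ (⨆ j, c j ^ s) ^ (1/s) := by
        intro i
        have : c i ^ s ≤ ⨆ j, c j ^ s := le_iSup (fun j => c j ^ s) i
        calc c i = (c i ^ s) ^ (1/s) := by
              rw [one_div, ENNReal.rpow_rpow_inv hs.ne']
          _ ≤ (⨆ j, c j ^ s) ^ (1/s) := ENNReal.rpow_le_rpow this (by positivity)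
      calc (⨆ i, c i) ^ s ≤ ((⨆ j, c j ^ s) ^ (1/s)) ^ s :=
            ENNReal.rpow_le_rpow (iSup_le h1) hs.le
        _ = ⨆ j, c j ^ s := by rw [one_div, ENNReal.rpow_inv_rpow hs.ne']
  · exact iSup_le fun i => ENNReal.rpow_le_rpow (le_iSup c i) hs.le

lemma aux_tsum_iSup {X : Type*} (h : ℕ → X → ℝ≥0∞) (hm : Monotone h) :
    ∑' x, ⨆ n, h n x = ⨆ n, ∑' x, h n x := by
  apply le_antisymm
  · rw [ENNReal.tsum_eq_iSup_sum]
    apply iSup_le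
    intro F
    rw [ENNReal.finsetSum_iSup_of_monotone (fun x => fun n m hnm => hm hnm x)]
    exact iSup_mono fun n => ENNReal.sum_le_tsum F
  · exact iSup_le fun n => ENNReal.tsum_le_tsum fun x => le_iSup (fun n => h n x) n

lemma aux_tsum_rpow_mono {ι : Type*} (a : ι → ℝ≥0∞) {ρ r : ℝ} (h0 : 0 < ρ) (hρr : ρ ≤ r) :
    (∑' i, a i ^ r) ^ (1/r) ≤ (∑' i, a i ^ ρ) ^ (1/ρ) := by
  rcases eq_or_lt_of_le hρr with rfl | hlt
  · exact le_rfl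
  have hr0 : 0 < r := h0.trans hlt
  set A := (∑' i, a i ^ ρ) ^ (1/ρ) with hA
  rcases eq_or_ne A ⊤ with hAtop | hAtop
  · simp [hAtop]
  have hAi : ∀ i, a i ≤ A := by
    intro i
    calc a i = (a i ^ ρ) ^ (1/ρ) := by rw [one_div, ENNReal.rpow_rpow_inv h0.ne']
      _ ≤ A := ENNReal.rpow_le_rpow (ENNReal.le_tsum i) (by positivity)
  rcases eq_or_ne A 0 with hA0 | hA0
  · have : ∀ i, a i = 0 := fun i => le_antisymm (hA0 ▸ hAi i) zero_le
    simp [this, ENNReal.zero_rpow_of_pos hr0, ENNReal.zero_rpow_of_pos h0,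
      ENNReal.zero_rpow_of_pos (by positivity : (0:ℝ) < 1/r),
      ENNReal.zero_rpow_of_pos (show (0:ℝ) < r⁻¹ by positivity)]
  have key : ∑' i, a i ^ r ≤ A ^ r := by
    have h1 : ∀ i, a i ^ r ≤ A ^ (r - ρ) * a i ^ ρ := by
      intro i
      rcases eq_or_ne (a i) 0 with h | h
      · simp [h, ENNReal.zero_rpow_of_pos hr0]
      have hitop : a i ≠ ⊤ := fun ht => hAtop (top_le_iff.mp (ht ▸ hAi i))
      calc a i ^ r = a i ^ (r - ρ) * a i ^ ρ := by
            rw [← ENNReal.rpow_add _ _ h hitop]; ring_nf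
        _ ≤ A ^ (r - ρ) * a i ^ ρ :=
            mul_le_mul_left (ENNReal.rpow_le_rpow (hAi i) (by linarith)) _
    calc ∑' i, a i ^ r ≤ ∑' i, A ^ (r - ρ) * a i ^ ρ := ENNReal.tsum_le_tsum h1
      _ = A ^ (r - ρ) * ∑' i, a i ^ ρ := ENNReal.tsum_mul_left
      _ = A ^ (r - ρ) * A ^ ρ := by
          rw [hA, one_div, ENNReal.rpow_inv_rpow h0.ne']
      _ = A ^ r := by rw [← ENNReal.rpow_add _ _ hA0 hAtop]; ring_nf
  calc (∑' i, a i ^ r) ^ (1/r) ≤ (A ^ r) ^ (1/r) :=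
        ENNReal.rpow_le_rpow key (by positivity)
    _ = A := by rw [one_div, ENNReal.rpow_rpow_inv hr0.ne']

lemma aux_Lp_add {X : Type*} (g h : X → ℝ≥0∞) {s : ℝ} (hs : 1 ≤ s) :
    (∑' x, (g x + h x) ^ s) ^ (1/s) ≤ (∑' x, g x ^ s) ^ (1/s) + (∑' x, h x ^ s) ^ (1/s) := by
  have hs0 : (0:ℝ) < s := lt_of_lt_of_le zero_lt_one hs
  rw [ENNReal.tsum_eq_iSup_sum (f := fun x => (g x + h x) ^ s),
    aux_rpow_iSup _ (by positivity : (0:ℝ) < 1/s)]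
  apply iSup_le
  intro F
  calc (∑ x ∈ F, (g x + h x) ^ s) ^ (1/s)
      ≤ (∑ x ∈ F, g x ^ s) ^ (1/s) + (∑ x ∈ F, h x ^ s) ^ (1/s) := ENNReal.Lp_add_le F g h hs
    _ ≤ (∑' x, g x ^ s) ^ (1/s) + (∑' x, h x ^ s) ^ (1/s) := by
        gcongr <;> exact ENNReal.sum_le_tsum F

lemma aux_Lp_sum {X ι : Type*} (F : Finset ι) (c : ι → X → ℝ≥0∞) {s : ℝ} (hs : 1 ≤ s) :
    (∑' x, (∑ i ∈ F, c i x) ^ s) ^ (1/s) ≤ ∑ i ∈ F, (∑' x, c i x ^ s) ^ (1/s) := by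
  have hs0 : (0:ℝ) < s := lt_of_lt_of_le zero_lt_one hs
  induction F using Finset.cons_induction with
  | empty =>
    have h1 : (0:ℝ≥0∞) ^ s = 0 := ENNReal.zero_rpow_of_pos hs0
    have h2 : (0:ℝ≥0∞) ^ (1/s) = 0 := ENNReal.zero_rpow_of_pos (by positivity)
    simp [h1, h2, hs0]
  | cons i F hi ih =>
    simp only [Finset.sum_cons]
    calc (∑' x, (c i x + ∑ j ∈ F, c j x) ^ s) ^ (1/s)
        ≤ (∑' x, c i x ^ s) ^ (1/s) + (∑' x, (∑ j ∈ F, c j x) ^ s) ^ (1/s) :=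
          aux_Lp_add _ _ hs
      _ ≤ _ := add_le_add le_rfl ih

lemma aux_Lp_tsum {X : Type*} (c : ℕ → X → ℝ≥0∞) {s : ℝ} (hs : 1 ≤ s) :
    (∑' x, (∑' i, c i x) ^ s) ^ (1/s) ≤ ∑' i, (∑' x, c i x ^ s) ^ (1/s) := by
  have hs0 : (0:ℝ) < s := lt_of_lt_of_le zero_lt_one hs
  have h1 : ∀ x, (∑' i, c i x) ^ s = ⨆ n, (∑ i ∈ Finset.range n, c i x) ^ s := by
    intro x
    rw [ENNReal.tsum_eq_iSup_nat, aux_rpow_iSup _ hs0]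
  have hmono : Monotone (fun n => fun x => (∑ i ∈ Finset.range n, c i x) ^ s) := by
    intro n m hnm
    intro x
    exact ENNReal.rpow_le_rpow (Finset.sum_le_sum_of_subset
      (Finset.range_subset_range.mpr hnm)) hs0.le
  calc (∑' x, (∑' i, c i x) ^ s) ^ (1/s)
      = (⨆ n, ∑' x, (∑ i ∈ Finset.range n, c i x) ^ s) ^ (1/s) := by
        simp only [h1]; rw [aux_tsum_iSup _ hmono]
    _ = ⨆ n, (∑' x, (∑ i ∈ Finset.range n, c i x) ^ s) ^ (1/s) :=
        aux_rpow_iSup _ (by positivity)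
    _ ≤ ⨆ n, ∑ i ∈ Finset.range n, (∑' x, c i x ^ s) ^ (1/s) :=
        iSup_mono fun n => aux_Lp_sum _ _ hs
    _ ≤ ∑' i, (∑' x, c i x ^ s) ^ (1/s) :=
        iSup_le fun n => ENNReal.sum_le_tsum _

lemma aux_Lp_tsum' {X ι : Type*} (e : ι ≃ ℕ) (c : ι → X → ℝ≥0∞) {s : ℝ} (hs : 1 ≤ s) :
    (∑' x, (∑' i, c i x) ^ s) ^ (1/s) ≤ ∑' i, (∑' x, c i x ^ s) ^ (1/s) := by
  have h1 : ∀ x, (∑' i : ι, c i x) = ∑' n : ℕ, c (e.symm n) x := fun x =>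
    (e.symm.tsum_eq (fun i => c i x)).symm
  have h2 : (∑' i : ι, (∑' x, c i x ^ s) ^ (1/s))
      = ∑' n : ℕ, (∑' x, c (e.symm n) x ^ s) ^ (1/s) :=
    (e.symm.tsum_eq _).symm
  simp only [h1, h2]
  exact aux_Lp_tsum _ hs

lemma aux_telescope {E : Type*} [NormedAddCommGroup E] (u : ℕ → E) {a b : ℕ} (hab : a ≤ b) :
    (‖u b - u a‖₊ : ℝ≥0∞) ≤ ∑ N ∈ Finset.Ico a b, (‖u (N+1) - u N‖₊ : ℝ≥0∞) := by
  induction b, hab using Nat.le_induction with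
  | base => simp
  | succ b hab ih =>
    have : u (b+1) - u a = (u (b+1) - u b) + (u b - u a) := by abel
    rw [Finset.sum_Ico_succ_top hab, this]
    calc (‖(u (b+1) - u b) + (u b - u a)‖₊ : ℝ≥0∞)
        ≤ (‖u (b+1) - u b‖₊ : ℝ≥0∞) + ‖u b - u a‖₊ := by
          norm_cast; exact nnnorm_add_le _ _
      _ ≤ _ := by rw [add_comm]; exact add_le_add ih le_rfl

lemma aux_chain {E : Type*} [NormedAddCommGroup E] (u : ℕ → E) :
    ∀ (J : ℕ) (t : Fin (J+1) → ℕ), StrictMono t →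
    ∑ j : Fin J, (‖u (t j.succ) - u (t j.castSucc)‖₊ : ℝ≥0∞)
      ≤ ∑ N ∈ Finset.Ico (t 0) (t (Fin.last J)), (‖u (N+1) - u N‖₊ : ℝ≥0∞) := by
  intro J
  induction J with
  | zero => intro t _; simp
  | succ J ih =>
    intro t ht
    rw [Fin.sum_univ_castSucc]
    calc (∑ j : Fin J, (‖u (t (j.castSucc).succ) - u (t (j.castSucc).castSucc)‖₊ : ℝ≥0∞))
          + (‖u (t (Fin.last J).succ) - u (t (Fin.last J).castSucc)‖₊ : ℝ≥0∞)
        = (∑ j : Fin J, (‖u ((t ∘ Fin.castSucc) j.succ) - u ((t ∘ Fin.castSucc) j.castSucc)‖₊ : ℝ≥0∞))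
          + (‖u (t (Fin.last (J+1))) - u (t (Fin.last J).castSucc)‖₊ : ℝ≥0∞) := by
          simp only [Function.comp_apply, Fin.succ_castSucc, Fin.succ_last]
      _ ≤ (∑ N ∈ Finset.Ico (t 0) (t (Fin.last J).castSucc), (‖u (N+1) - u N‖₊ : ℝ≥0∞))
          + ∑ N ∈ Finset.Ico (t (Fin.last J).castSucc) (t (Fin.last (J+1))), (‖u (N+1) - u N‖₊ : ℝ≥0∞) := by
          gcongr
          · have := ih (t ∘ Fin.castSucc) (ht.comp Fin.strictMono_castSucc)
            simpa using this
          · exact aux_telescope u (le_of_lt (ht (by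
              rw [← Fin.succ_last]
              exact Fin.castSucc_lt_succ)))
      _ = ∑ N ∈ Finset.Ico (t 0) (t (Fin.last (J+1))), (‖u (N+1) - u N‖₊ : ℝ≥0∞) := by
          apply Finset.sum_Ico_consecutive
          · exact ht.monotone (Fin.zero_le _)
          · exact (ht (by rw [← Fin.succ_last]; exact Fin.castSucc_lt_succ)).le

lemma aux_hVar_le {E : Type*} [NormedAddCommGroup E] (u : ℕ → E) (lo hi : ℕ)
    (q : ℝ≥0∞) (hq : 1 ≤ q) :
    hVarE q (fun n : {n : ℕ // n ∈ Set.Icc lo hi} => u n)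
      ≤ ∑ N ∈ Finset.Ico lo hi, (‖u (N+1) - u N‖₊ : ℝ≥0∞) := by
  unfold hVarE
  split_ifs with htop
  · apply iSup_le; intro s; apply iSup_le; intro t; apply iSup_le; intro hst
    have hst' : (s : ℕ) < (t : ℕ) := hst
    calc (‖u t - u s‖₊ : ℝ≥0∞)
        ≤ ∑ N ∈ Finset.Ico (s : ℕ) (t : ℕ), (‖u (N+1) - u N‖₊ : ℝ≥0∞) :=
          aux_telescope u hst'.le
      _ ≤ ∑ N ∈ Finset.Ico lo hi, (‖u (N+1) - u N‖₊ : ℝ≥0∞) :=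
          Finset.sum_le_sum_of_subset (Finset.Ico_subset_Ico s.2.1 t.2.2)
  · have hr : 1 ≤ q.toReal := by
      rw [← ENNReal.toReal_one]; exact ENNReal.toReal_mono htop hq
    have hr0 : q.toReal ≠ 0 := by positivity
    apply iSup_le; intro J; apply iSup_le; intro t; apply iSup_le; intro ht
    have ht' : StrictMono (fun j => ((t j : ℕ))) := fun a b hab => ht hab
    rcases Nat.eq_zero_or_pos J with rfl | hJ
    · have h2 : (0:ℝ≥0∞) ^ (q.toReal)⁻¹ = 0 :=
        ENNReal.zero_rpow_of_pos (by positivity)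
      simp [h2]
    calc (∑ j : Fin J, (‖u (t j.succ) - u (t j.castSucc)‖₊ : ℝ≥0∞) ^ q.toReal) ^ (1/q.toReal)
        ≤ ((∑ j : Fin J, (‖u (t j.succ) - u (t j.castSucc)‖₊ : ℝ≥0∞)) ^ q.toReal)
            ^ (1/q.toReal) :=
          ENNReal.rpow_le_rpow (aux_sum_rpow_le _ _ hr) (by positivity)
      _ = ∑ j : Fin J, (‖u (t j.succ) - u (t j.castSucc)‖₊ : ℝ≥0∞) := by
          rw [one_div, ENNReal.rpow_rpow_inv hr0]
      _ ≤ ∑ N ∈ Finset.Ico ((t 0 : ℕ)) ((t (Fin.last _) : ℕ)), (‖u (N+1) - u N‖₊ : ℝ≥0∞) := by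
          obtain ⟨J', rfl⟩ : ∃ J', J = J' + 1 := ⟨J - 1, (Nat.succ_pred_eq_of_pos hJ).symm⟩
          exact aux_chain u _ _ ht'
      _ ≤ ∑ N ∈ Finset.Ico lo hi, (‖u (N+1) - u N‖₊ : ℝ≥0∞) :=
          Finset.sum_le_sum_of_subset (Finset.Ico_subset_Ico (t 0).2.1 (t (Fin.last _)).2.2)

lemma aux_nnnorm_tsum_le {ι E : Type*} [NormedAddCommGroup E] [CompleteSpace E] (g : ι → E) :
    (‖∑' i, g i‖₊ : ℝ≥0∞) ≤ ∑' i, (‖g i‖₊ : ℝ≥0∞) := by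
  rcases eq_or_ne (∑' i, (‖g i‖₊ : ℝ≥0∞)) ⊤ with h | h
  · exact h ▸ le_top
  have hs : Summable fun i => ‖g i‖₊ := ENNReal.tsum_coe_ne_top_iff_summable.mp h
  calc (‖∑' i, g i‖₊ : ℝ≥0∞) ≤ ((∑' i, ‖g i‖₊ : ℝ≥0) : ℝ≥0∞) :=
        ENNReal.coe_le_coe.mpr (nnnorm_tsum_le hs)
    _ = ∑' i, (‖g i‖₊ : ℝ≥0∞) := ENNReal.coe_tsum hs

/-- The short variation is controlled by any pointwise bound on the block variations. -/
lemma aux_sVar_le (p : ℝ) (hp : 1 < p) (q : ℝ≥0∞) (hq : 1 < q) (Nseq : ℕ → ℕ)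
    {E : Type*} [NormedAddCommGroup E] (u : ℕ → E) (B : ℕ → ℝ≥0∞)
    (hB : ∀ j, hVarE q (fun n : {n : ℕ // n ∈ Set.Icc (Nseq j) (Nseq (j + 1))} => u n) ≤ B j) :
    sVarE q Nseq u ≤ (∑' j, B j ^ (min (ENNReal.ofReal p) q).toReal)
      ^ (1 / (min (ENNReal.ofReal p) q).toReal) := by
  have hp0 : (0:ℝ) < p := by linarith
  set ρ := (min (ENNReal.ofReal p) q).toReal with hρdef
  have hρp : ρ ≤ p := by
    have h1 : min (ENNReal.ofReal p) q ≤ ENNReal.ofReal p := min_le_left _ _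
    calc ρ ≤ (ENNReal.ofReal p).toReal := ENNReal.toReal_mono ENNReal.ofReal_ne_top h1
      _ = p := ENNReal.toReal_ofReal hp0.le
  have hρpos : 0 < ρ := by
    have h1 : (1:ℝ≥0∞) < min (ENNReal.ofReal p) q := by
      apply lt_min _ hq
      rw [← ENNReal.ofReal_one]
      exact ENNReal.ofReal_lt_ofReal_iff hp0 |>.mpr hp
    have h2 : min (ENNReal.ofReal p) q ≠ ⊤ :=
      ne_top_of_le_ne_top ENNReal.ofReal_ne_top (min_le_left _ _)
    have := ENNReal.toReal_pos (by positivity : (1:ℝ≥0∞) ≠ 0)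
    rw [hρdef]
    exact ENNReal.toReal_pos (by exact (lt_trans zero_lt_one h1).ne') h2
  unfold sVarE
  split_ifs with htop
  · -- q = ⊤, so min = ofReal p and ρ = p
    have hmin : min (ENNReal.ofReal p) q = ENNReal.ofReal p := by
      rw [htop]; exact min_eq_left le_top
    have hρ : ρ = p := by rw [hρdef, hmin, ENNReal.toReal_ofReal hp0.le]
    apply iSup_le
    intro j
    calc hVarE ⊤ (fun n : {n : ℕ // n ∈ Set.Icc (Nseq j) (Nseq (j + 1))} => u n)
        ≤ B j := htop ▸ hB j
      _ = (B j ^ ρ) ^ (1/ρ) := by rw [one_div, ENNReal.rpow_rpow_inv hρpos.ne']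
      _ ≤ (∑' k, B k ^ ρ) ^ (1/ρ) :=
          ENNReal.rpow_le_rpow (ENNReal.le_tsum j) (by positivity)
  · have hr : q.toReal ≤ p ∨ ρ ≤ q.toReal := Or.inr (by
      have h1 : min (ENNReal.ofReal p) q ≤ q := min_le_right _ _
      exact ENNReal.toReal_mono htop h1)
    have hρr : ρ ≤ q.toReal := by
      have h1 : min (ENNReal.ofReal p) q ≤ q := min_le_right _ _
      exact ENNReal.toReal_mono htop h1
    calc (∑' j, hVarE q (fun n : {n : ℕ // n ∈ Set.Icc (Nseq j) (Nseq (j + 1))} => u n)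
            ^ q.toReal) ^ (1/q.toReal)
        ≤ (∑' j, B j ^ q.toReal) ^ (1/q.toReal) := by
          gcongr with j
          exact hB j
      _ ≤ (∑' j, B j ^ ρ) ^ (1/ρ) := aux_tsum_rpow_mono B hρpos hρr
/-- Short variation estimate: if the increments of the kernels `K_N ∈ ℓ¹(ℤ^d)` summed over
the blocks `[N_k, N_{k+1}]` form an `ℓ^{min(p,q)}` sequence, then the short `q`-variation of
`N ↦ K_N * f` with respect to `Z = {N_1 < N_2 < …}` is bounded on `ℓ^p(ℤ^d)`. -/
theorem variation_short_lp (d : ℕ) (hd : 1 ≤ d) (p : ℝ) (hp : 1 < p) (q : ℝ≥0∞)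
    (hq : 1 < q) (Nseq : ℕ → ℕ) (hN : StrictMono Nseq)
    (K : ℕ → (Fin d → ℤ) → ℂ) (hK : ∀ N, Summable fun y => ‖K N y‖)
    (hincr : (∑' k : ℕ,
        ENNReal.ofReal (∑ N ∈ Finset.Icc (Nseq k) (Nseq (k + 1)),
            ∑' y : Fin d → ℤ, ‖K (N + 1) y - K N y‖)
          ^ (min (ENNReal.ofReal p) q).toReal) ≠ ⊤) :
    ∃ C : ℝ≥0, ∀ f : (Fin d → ℤ) → ℂ,
      (∑' x : Fin d → ℤ,
          sVarE q Nseq (fun N => ∑' y : Fin d → ℤ, K N y * f (x - y)) ^ p) ^ (1 / p)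
        ≤ C * (∑' x : Fin d → ℤ, (‖f x‖₊ : ℝ≥0∞) ^ p) ^ (1 / p) := by
  classical
  have hp0 : (0:ℝ) < p := by linarith
  set ρ := (min (ENNReal.ofReal p) q).toReal with hρdef
  have hρp : ρ ≤ p := by
    have h1 : min (ENNReal.ofReal p) q ≤ ENNReal.ofReal p := min_le_left _ _
    calc ρ ≤ (ENNReal.ofReal p).toReal := ENNReal.toReal_mono ENNReal.ofReal_ne_top h1
      _ = p := ENNReal.toReal_ofReal hp0.le
  have hρpos : 0 < ρ := by
    have h1 : (1:ℝ≥0∞) < min (ENNReal.ofReal p) q := by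
      apply lt_min _ hq
      rw [← ENNReal.ofReal_one]
      exact ENNReal.ofReal_lt_ofReal_iff hp0 |>.mpr hp
    have h2 : min (ENNReal.ofReal p) q ≠ ⊤ :=
      ne_top_of_le_ne_top ENNReal.ofReal_ne_top (min_le_left _ _)
    exact ENNReal.toReal_pos (lt_trans zero_lt_one h1).ne' h2
  set s := p / ρ with hsdef
  have hs1 : 1 ≤ s := by
    rw [hsdef, le_div_iff₀ hρpos]; linarith
  -- an equivalence ℤ^d ≃ ℕ
  haveI hne : Nonempty (Fin d) := ⟨⟨0, hd⟩⟩
  haveI : Infinite (Fin d → ℤ) :=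
    Infinite.of_injective (fun z : ℤ => fun _ => z) (fun a b h => congrFun h ⟨0, hd⟩)
  letI : Encodable (Fin d → ℤ) := Encodable.ofCountable _
  letI : Denumerable (Fin d → ℤ) := Denumerable.ofEncodableOfInfinite _
  let e : (Fin d → ℤ) ≃ ℕ := Denumerable.eqv _
  -- the constant
  set C0 : ℝ≥0∞ := (∑' k : ℕ,
      ENNReal.ofReal (∑ N ∈ Finset.Icc (Nseq k) (Nseq (k + 1)),
          ∑' y : Fin d → ℤ, ‖K (N + 1) y - K N y‖) ^ ρ) ^ (1/ρ) with hC0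
  have hC0top : C0 ≠ ⊤ := by
    rw [hC0]
    exact ENNReal.rpow_ne_top_of_nonneg (by positivity) hincr
  refine ⟨max C0.toNNReal 1, ?_⟩
  intro f
  set Φf := (∑' x : Fin d → ℤ, (‖f x‖₊ : ℝ≥0∞) ^ p) ^ (1/p) with hΦf
  have hCge : C0 ≤ ((max C0.toNNReal 1 : ℝ≥0) : ℝ≥0∞) := by
    calc C0 = (C0.toNNReal : ℝ≥0∞) := (ENNReal.coe_toNNReal hC0top).symm
      _ ≤ _ := ENNReal.coe_le_coe.mpr (le_max_left _ _)
  rcases eq_or_ne (∑' x : Fin d → ℤ, (‖f x‖₊ : ℝ≥0∞) ^ p) ⊤ with hf | hf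
  · have h1 : Φf = ⊤ := by
      rw [hΦf, hf]; exact ENNReal.top_rpow_of_pos (by positivity)
    have h2 : ((max C0.toNNReal 1 : ℝ≥0) : ℝ≥0∞) ≠ 0 := by
      simp only [ne_eq, ENNReal.coe_eq_zero]
      intro h
      simpa [h] using (le_max_right C0.toNNReal 1)
    calc (∑' x : Fin d → ℤ,
          sVarE q Nseq (fun N => ∑' y : Fin d → ℤ, K N y * f (x - y)) ^ p) ^ (1 / p)
        ≤ ⊤ := le_top
      _ = ((max C0.toNNReal 1 : ℝ≥0) : ℝ≥0∞) * Φf := by rw [h1, ENNReal.mul_top h2]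
  -- f has finite ℓ^p norm, hence is bounded
  have hΦftop : Φf ≠ ⊤ := by
    rw [hΦf]; exact ENNReal.rpow_ne_top_of_nonneg (by positivity) hf
  have hfb : ∀ z, (‖f z‖₊ : ℝ≥0∞) ≤ Φf := by
    intro z
    calc (‖f z‖₊ : ℝ≥0∞) = ((‖f z‖₊ : ℝ≥0∞) ^ p) ^ (1/p) := by
          rw [one_div, ENNReal.rpow_rpow_inv hp0.ne']
      _ ≤ Φf := ENNReal.rpow_le_rpow (ENNReal.le_tsum z) (by positivity)
  obtain ⟨M, hM⟩ : ∃ M : ℝ≥0, ∀ z, ‖f z‖₊ ≤ M := by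
    refine ⟨Φf.toNNReal, fun z => ?_⟩
    have := hfb z
    rw [← ENNReal.coe_toNNReal hΦftop] at this
    exact_mod_cast this
  have hsum : ∀ (N : ℕ) (x : Fin d → ℤ), Summable fun y => ‖K N y * f (x - y)‖ := by
    intro N x
    apply Summable.of_nonneg_of_le (fun y => norm_nonneg _) (fun y => ?_)
      ((hK N).mul_right (M : ℝ))
    rw [norm_mul]
    have : ‖f (x - y)‖ ≤ (M : ℝ) := by exact_mod_cast hM (x - y)
    exact mul_le_mul_of_nonneg_left this (norm_nonneg _)
  have hsum' : ∀ (N : ℕ) (x : Fin d → ℤ), Summable fun y => K N y * f (x - y) :=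
    fun N x => (hsum N x).of_norm
  set u : (Fin d → ℤ) → ℕ → ℂ := fun x N => ∑' y, K N y * f (x - y) with hu
  set G : ℕ → (Fin d → ℤ) → ℝ≥0∞ := fun N y => (‖K (N+1) y - K N y‖₊ : ℝ≥0∞) with hG
  set F : (Fin d → ℤ) → ℝ≥0∞ := fun x => (‖f x‖₊ : ℝ≥0∞) with hF
  set W : ℕ → (Fin d → ℤ) → ℝ≥0∞ := fun N x => ∑' y, G N y * F (x - y) with hW
  have hinc : ∀ (N : ℕ) (x : Fin d → ℤ), (‖u x (N+1) - u x N‖₊ : ℝ≥0∞) ≤ W N x := by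
    intro N x
    have h1 : u x (N+1) - u x N = ∑' y, (K (N+1) y - K N y) * f (x - y) := by
      rw [hu]
      simp only
      rw [← Summable.tsum_sub (hsum' (N+1) x) (hsum' N x)]
      congr 1; funext y; ring
    rw [h1]
    calc (‖∑' y, (K (N+1) y - K N y) * f (x - y)‖₊ : ℝ≥0∞)
        ≤ ∑' y, (‖(K (N+1) y - K N y) * f (x - y)‖₊ : ℝ≥0∞) := aux_nnnorm_tsum_le _
      _ = W N x := by
          rw [hW]
          simp only [hG, hF]
          congr 1; funext y
          rw [nnnorm_mul, ENNReal.coe_mul]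
  have hGsum : ∀ N : ℕ, ∑' y, G N y
      = ENNReal.ofReal (∑' y : Fin d → ℤ, ‖K (N+1) y - K N y‖) := by
    intro N
    have hD : Summable fun y : Fin d → ℤ => ‖K (N+1) y - K N y‖ :=
      Summable.of_nonneg_of_le (fun y => norm_nonneg _) (fun y => norm_sub_le _ _)
        ((hK (N+1)).add (hK N))
    rw [ENNReal.ofReal_tsum_of_nonneg (fun y => norm_nonneg _) hD]
    exact tsum_congr fun y => (ofReal_norm _).symm
  have hYoung : ∀ N : ℕ, (∑' x, W N x ^ p) ^ (1/p) ≤ (∑' y, G N y) * Φf := by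
    intro N
    calc (∑' x, (∑' y, G N y * F (x - y)) ^ p) ^ (1/p)
        ≤ ∑' y, (∑' x, (G N y * F (x - y)) ^ p) ^ (1/p) :=
          aux_Lp_tsum' e (fun y x => G N y * F (x - y)) hp.le
      _ = ∑' y, G N y * Φf := by
          apply tsum_congr; intro y
          have h1 : ∀ x, (G N y * F (x - y)) ^ p = G N y ^ p * F (x - y) ^ p := fun x =>
            ENNReal.mul_rpow_of_nonneg _ _ hp0.le
          simp only [h1]
          rw [ENNReal.tsum_mul_left]
          have h2 : ∑' x, F (x - y) ^ p = ∑' x, F x ^ p :=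
            (Equiv.subRight y).tsum_eq (fun x => F x ^ p)
          rw [h2, ENNReal.mul_rpow_of_nonneg _ _ (by positivity : (0:ℝ) ≤ 1/p), one_div,
            ENNReal.rpow_rpow_inv hp0.ne', hΦf, one_div]
      _ = (∑' y, G N y) * Φf := ENNReal.tsum_mul_right
  set B : ℕ → (Fin d → ℤ) → ℝ≥0∞ :=
    fun j x => ∑ N ∈ Finset.Ico (Nseq j) (Nseq (j+1)), W N x with hBdef
  have hvar : ∀ x, sVarE q Nseq (u x) ≤ (∑' j, B j x ^ ρ) ^ (1/ρ) := by
    intro x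
    rw [hρdef]
    apply aux_sVar_le p hp q hq Nseq (u x) (fun j => B j x)
    intro j
    calc hVarE q (fun n : {n : ℕ // n ∈ Set.Icc (Nseq j) (Nseq (j + 1))} => u x n)
        ≤ ∑ N ∈ Finset.Ico (Nseq j) (Nseq (j+1)), (‖u x (N+1) - u x N‖₊ : ℝ≥0∞) :=
          aux_hVar_le (u x) _ _ q hq.le
      _ ≤ B j x := Finset.sum_le_sum fun N _ => hinc N x
  have hΦB : ∀ j, (∑' x, B j x ^ p) ^ (1/p)
      ≤ ENNReal.ofReal (∑ N ∈ Finset.Icc (Nseq j) (Nseq (j + 1)),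
          ∑' y : Fin d → ℤ, ‖K (N + 1) y - K N y‖) * Φf := by
    intro j
    calc (∑' x, (∑ N ∈ Finset.Ico (Nseq j) (Nseq (j+1)), W N x) ^ p) ^ (1/p)
        ≤ ∑ N ∈ Finset.Ico (Nseq j) (Nseq (j+1)), (∑' x, W N x ^ p) ^ (1/p) :=
          aux_Lp_sum _ _ hp.le
      _ ≤ ∑ N ∈ Finset.Ico (Nseq j) (Nseq (j+1)), (∑' y, G N y) * Φf :=
          Finset.sum_le_sum fun N _ => hYoung N
      _ = (∑ N ∈ Finset.Ico (Nseq j) (Nseq (j+1)), ∑' y, G N y) * Φf :=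
          (Finset.sum_mul _ _ _).symm
      _ ≤ (∑ N ∈ Finset.Icc (Nseq j) (Nseq (j+1)), ∑' y, G N y) * Φf :=
          mul_le_mul_left (Finset.sum_le_sum_of_subset Finset.Ico_subset_Icc_self) _
      _ = ENNReal.ofReal (∑ N ∈ Finset.Icc (Nseq j) (Nseq (j + 1)),
            ∑' y : Fin d → ℤ, ‖K (N + 1) y - K N y‖) * Φf := by
          congr 1
          rw [ENNReal.ofReal_sum_of_nonneg
            (fun N _ => tsum_nonneg fun y => norm_nonneg _)]
          exact Finset.sum_congr rfl fun N _ => hGsum N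
  have hux : ∀ x : Fin d → ℤ,
      (fun N => ∑' y : Fin d → ℤ, K N y * f (x - y)) = u x := fun x => rfl
  calc (∑' x : Fin d → ℤ,
          sVarE q Nseq (fun N => ∑' y : Fin d → ℤ, K N y * f (x - y)) ^ p) ^ (1 / p)
      = (∑' x, sVarE q Nseq (u x) ^ p) ^ (1/p) := by simp only [hux]
    _ ≤ (∑' x, ((∑' j, B j x ^ ρ) ^ (1/ρ)) ^ p) ^ (1/p) := by
        gcongr with x
        exact hvar x
    _ = ((∑' x, (∑' j, B j x ^ ρ) ^ s) ^ (1/s)) ^ (1/ρ) := by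
        have h1 : ∀ x : Fin d → ℤ, ((∑' j, B j x ^ ρ) ^ (1/ρ)) ^ p
            = (∑' j, B j x ^ ρ) ^ s := fun x => by
          rw [← ENNReal.rpow_mul]
          congr 1
          rw [hsdef]; field_simp
        simp only [h1]
        rw [← ENNReal.rpow_mul]
        congr 1
        rw [hsdef]; field_simp
    _ ≤ (∑' j, (∑' x, (B j x ^ ρ) ^ s) ^ (1/s)) ^ (1/ρ) :=
        ENNReal.rpow_le_rpow (aux_Lp_tsum (fun j x => B j x ^ ρ) hs1) (by positivity)
    _ = (∑' j, ((∑' x, B j x ^ p) ^ (1/p)) ^ ρ) ^ (1/ρ) := by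
        congr 1
        apply tsum_congr; intro j
        have h1 : ∀ x : Fin d → ℤ, (B j x ^ ρ) ^ s = B j x ^ p := fun x => by
          rw [← ENNReal.rpow_mul]
          congr 1
          rw [hsdef]; field_simp
        simp only [h1]
        rw [← ENNReal.rpow_mul]
        congr 1
        rw [hsdef]; field_simp
    _ ≤ (∑' j, (ENNReal.ofReal (∑ N ∈ Finset.Icc (Nseq j) (Nseq (j + 1)),
            ∑' y : Fin d → ℤ, ‖K (N + 1) y - K N y‖) * Φf) ^ ρ) ^ (1/ρ) := by
        gcongr with j
        exact hΦB j
    _ = C0 * Φf := by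
        have h1 : ∀ j : ℕ, (ENNReal.ofReal (∑ N ∈ Finset.Icc (Nseq j) (Nseq (j + 1)),
              ∑' y : Fin d → ℤ, ‖K (N + 1) y - K N y‖) * Φf) ^ ρ
            = ENNReal.ofReal (∑ N ∈ Finset.Icc (Nseq j) (Nseq (j + 1)),
              ∑' y : Fin d → ℤ, ‖K (N + 1) y - K N y‖) ^ ρ * Φf ^ ρ := fun j =>
          ENNReal.mul_rpow_of_nonneg _ _ hρpos.le
        simp only [h1]
        rw [ENNReal.tsum_mul_right,
          ENNReal.mul_rpow_of_nonneg _ _ (by positivity : (0:ℝ) ≤ 1/ρ), hC0, one_div,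
          ENNReal.rpow_rpow_inv hρpos.ne']
    _ ≤ ((max C0.toNNReal 1 : ℝ≥0) : ℝ≥0∞) * Φf := mul_le_mul_left hCge _
end

section
/- Let d ≥ 1. For every j with 1 ≤ j ≤ d there is a constant C = C(j, d) such that for all β = (β_1, …, β_d) ∈ ℝ^d with β_j ≠ 0 and all N > 0: |(1/N) ∫_0^N e(β_1 x + β_2 x² + ⋯ + β_d x^d) dx| ≤ C |β_j|^{−1/d} N^{−j/d}. -/
open MeasureTheory

/-- `e(x) = exp(2πix)`. -/
noncomputable def ce (x : ℝ) : ℂ := Complex.exp (Complex.I * (2 * Real.pi * x))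

open Set Polynomial intervalIntegral


lemma ce_norm (x : ℝ) : ‖ce x‖ = 1 := by
  simp [ce, Complex.norm_exp]

lemma ce_hasDerivAt (p : ℝ[X]) (x : ℝ) :
    HasDerivAt (fun t => ce (p.eval t))
      ((Complex.I * (2 * Real.pi * p.derivative.eval x)) * ce (p.eval x)) x := by
  have h0 : HasDerivAt (fun t : ℝ => ((p.eval t : ℝ) : ℂ)) ((p.derivative.eval x : ℝ) : ℂ) x :=
    Complex.ofRealCLM.hasFDerivAt.comp_hasDerivAt x (p.hasDerivAt x)
  have hp := (h0.const_mul (Complex.I * 2 * Real.pi)).cexp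
  have e1 : ∀ y : ℝ, Complex.I * 2 * Real.pi * ((p.eval y : ℝ) : ℂ)
      = Complex.I * (2 * Real.pi * ((p.eval y : ℝ) : ℂ)) := fun y => by ring
  simp only [ce, e1] at hp ⊢
  convert hp using 1
  ring

lemma norm_I2pi (y : ℝ) : ‖(Complex.I * (2 * Real.pi * (y:ℝ)) : ℂ)‖ = 2*Real.pi*|y| := by
  simp [abs_of_pos Real.pi_pos]

lemma osc_bound (p : ℝ[X]) (a b δ : ℝ) (hab : a ≤ b) (hδ : 0 < δ)
    (h1 : ∀ x ∈ Icc a b, δ ≤ |p.derivative.eval x|)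
    (h2 : (∀ x ∈ Icc a b, 0 ≤ p.derivative.derivative.eval x)
        ∨ (∀ x ∈ Icc a b, p.derivative.derivative.eval x ≤ 0)) :
    ‖∫ x in a..b, ce (p.eval x)‖ ≤ 1 / δ := by
  set q := p.derivative with hqdef
  set r := q.derivative with hrdef
  have hpi : (0:ℝ) < Real.pi := Real.pi_pos
  have huIcc : Set.uIcc a b = Icc a b := Set.uIcc_of_le hab
  have hq0 : ∀ x ∈ Icc a b, q.eval x ≠ 0 := by
    intro x hx
    have := h1 x hx
    intro h; rw [h] at this; simp at this; linarith
  have hg0 : ∀ x ∈ Icc a b, (Complex.I * (2 * Real.pi * (q.eval x : ℝ)) : ℂ) ≠ 0 := by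
    intro x hx
    intro h
    apply hq0 x hx
    have h2 : ((2 * Real.pi * q.eval x : ℝ) : ℂ) = 0 := by
      rcases mul_eq_zero.mp h with h' | h'
      · exact absurd h' Complex.I_ne_zero
      · push_cast; exact h'
    have h3 : (2 * Real.pi * q.eval x : ℝ) = 0 := by exact_mod_cast h2
    have h2pi : (2 * Real.pi : ℝ) ≠ 0 := by positivity
    rcases mul_eq_zero.mp h3 with h' | h'
    · exact absurd h' h2pi
    · exact h' 
  -- u and its derivative
  set u : ℝ → ℂ := fun x => (Complex.I * (2 * Real.pi * (q.eval x : ℝ)))⁻¹ with hu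
  set u' : ℝ → ℂ := fun x =>
    -(Complex.I * (2 * Real.pi * (r.eval x : ℝ))) / (Complex.I * (2 * Real.pi * (q.eval x : ℝ))) ^ 2 with hu'
  have hud : ∀ x ∈ Set.uIcc a b, HasDerivAt u (u' x) x := by
    intro x hx
    rw [huIcc] at hx
    have h0 : HasDerivAt (fun t : ℝ => ((q.eval t : ℝ) : ℂ)) ((r.eval x : ℝ) : ℂ) x :=
      Complex.ofRealCLM.hasFDerivAt.comp_hasDerivAt x (q.hasDerivAt x)
    have h1' : HasDerivAt (fun t : ℝ => (Complex.I * (2 * Real.pi * ((q.eval t : ℝ) : ℂ))))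
        (Complex.I * (2 * Real.pi * ((r.eval x : ℝ) : ℂ))) x := by
      have := (h0.const_mul (Complex.I * 2 * Real.pi))
      have e1 : ∀ y : ℝ, Complex.I * 2 * Real.pi * ((q.eval y : ℝ) : ℂ)
          = Complex.I * (2 * Real.pi * ((q.eval y : ℝ) : ℂ)) := fun y => by ring
      simp only [e1] at this
      exact this.congr_deriv (by ring)
    have hdiv := (hasDerivAt_const x (1:ℂ)).div h1' (hg0 x hx)
    have hfun : u = (fun _ => (1:ℂ)) / fun t => Complex.I * (2 * Real.pi * ((q.eval t : ℝ) : ℂ)) := by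
      funext t; simp [hu, one_div]
    rw [hfun]
    exact hdiv.congr_deriv (by simp only [hu']; ring)
  set v : ℝ → ℂ := fun x => ce (p.eval x) with hv
  set v' : ℝ → ℂ := fun x => (Complex.I * (2 * Real.pi * q.eval x)) * ce (p.eval x) with hv'
  have hvd : ∀ x ∈ Set.uIcc a b, HasDerivAt v (v' x) x := fun x _ => ce_hasDerivAt p x
  have hqc : ContinuousOn (fun x : ℝ => (Complex.I * (2 * Real.pi * ((q.eval x : ℝ) : ℂ)))) (Icc a b) := by
    apply ContinuousOn.mul continuousOn_const
    apply ContinuousOn.mul continuousOn_const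
    exact (Complex.continuous_ofReal.comp q.continuous).continuousOn
  have hrc : ContinuousOn (fun x : ℝ => (Complex.I * (2 * Real.pi * ((r.eval x : ℝ) : ℂ)))) (Icc a b) := by
    apply ContinuousOn.mul continuousOn_const
    apply ContinuousOn.mul continuousOn_const
    exact (Complex.continuous_ofReal.comp r.continuous).continuousOn
  have hu'c : ContinuousOn u' (Icc a b) := by
    apply ContinuousOn.div hrc.neg (hqc.pow 2)
    intro x hx
    exact pow_ne_zero 2 (hg0 x hx)
  have hu'int : IntervalIntegrable u' volume a b := by
    rw [intervalIntegrable_iff_integrableOn_Icc_of_le hab]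
    exact hu'c.integrableOn_compact isCompact_Icc
  have hv'int : IntervalIntegrable v' volume a b := by
    apply Continuous.intervalIntegrable
    apply Continuous.mul
    · exact continuous_const.mul (continuous_const.mul (Complex.continuous_ofReal.comp q.continuous))
    · exact Complex.continuous_exp.comp (continuous_const.mul
        (continuous_const.mul (Complex.continuous_ofReal.comp p.continuous)))
  have hibp := intervalIntegral.integral_mul_deriv_eq_deriv_mul hud hvd hu'int hv'int
  have hmain : ∫ x in a..b, ce (p.eval x) = ∫ x in a..b, u x * v' x := by
    apply intervalIntegral.integral_congr
    intro x hx
    rw [huIcc] at hx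
    simp only [hu, hv']
    rw [← mul_assoc, inv_mul_cancel₀ (hg0 x hx), one_mul]
  -- bounds on u
  have hub : ∀ x ∈ Icc a b, ‖u x‖ ≤ (2*Real.pi*δ)⁻¹ := by
    intro x hx
    simp only [hu, norm_inv, norm_I2pi]
    apply inv_anti₀
    · positivity
    · have := h1 x hx
      nlinarith [hpi]
  -- the antiderivative for the u' integral
  set W : ℝ → ℝ := fun x => -((2*Real.pi)⁻¹ * (q.eval x)⁻¹) with hW
  have hWd : ∀ x ∈ Set.uIcc a b, HasDerivAt W ((2*Real.pi)⁻¹ * (r.eval x / (q.eval x)^2)) x := by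
    intro x hx
    rw [huIcc] at hx
    have h0 := ((q.hasDerivAt x).inv (hq0 x hx)).const_mul ((2*Real.pi)⁻¹)
    have := h0.neg
    exact this.congr_deriv (by rw [hrdef]; ring)
  have hWb : ∀ x ∈ Icc a b, |W x| ≤ (2*Real.pi*δ)⁻¹ := by
    intro x hx
    have h1' := h1 x hx
    have hqx : δ ≤ |q.eval x| := h1'
    simp only [hW, abs_neg, abs_mul, abs_inv, abs_two, abs_of_pos hpi]
    rw [mul_inv (2*Real.pi) δ]
    exact mul_le_mul_of_nonneg_left (inv_anti₀ hδ hqx) (by positivity)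
  have hWint : IntervalIntegrable (fun x => (2*Real.pi)⁻¹ * (r.eval x / (q.eval x)^2)) volume a b := by
    rw [intervalIntegrable_iff_integrableOn_Icc_of_le hab]
    apply ContinuousOn.integrableOn_compact isCompact_Icc
    apply ContinuousOn.mul continuousOn_const
    apply ContinuousOn.div r.continuous.continuousOn (q.continuous.continuousOn.pow 2)
    intro x hx
    exact pow_ne_zero 2 (hq0 x hx)
  have hWftc : ∫ x in a..b, (2*Real.pi)⁻¹ * (r.eval x / (q.eval x)^2) = W b - W a :=
    intervalIntegral.integral_eq_sub_of_hasDerivAt hWd hWint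
  -- norm of u'
  have hnu' : ∀ x, ‖u' x‖ = (2*Real.pi)⁻¹ * (|r.eval x| / (q.eval x)^2) := by
    intro x
    simp only [hu', norm_div, norm_neg, norm_pow, norm_I2pi]
    rw [mul_pow, sq_abs]
    rcases eq_or_ne (q.eval x) 0 with h | h
    · simp [h]
    · have hπ : Real.pi ≠ 0 := Real.pi_ne_zero
      field_simp
  -- bound on ∫ ‖u'‖
  have hIu' : (∫ x in a..b, ‖u' x * v x‖) ≤ 2 * (2*Real.pi*δ)⁻¹ := by
    have hcong : ∀ x ∈ Set.uIcc a b, ‖u' x * v x‖ = ‖u' x‖ := by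
      intro x _
      rw [norm_mul, hv, ce_norm, mul_one]
    rw [intervalIntegral.integral_congr hcong]
    rcases h2 with hpos | hneg
    · have hcong2 : ∀ x ∈ Set.uIcc a b, ‖u' x‖ = (2*Real.pi)⁻¹ * (r.eval x / (q.eval x)^2) := by
        intro x hx
        rw [huIcc] at hx
        rw [hnu', abs_of_nonneg (hpos x hx)]
      rw [intervalIntegral.integral_congr hcong2, hWftc]
      have := hWb a ⟨le_refl a, hab⟩
      have := hWb b ⟨hab, le_refl b⟩
      have := abs_sub (W b) (W a)
      calc W b - W a ≤ |W b - W a| := le_abs_self _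
        _ ≤ |W b| + |W a| := abs_sub _ _
        _ ≤ 2 * (2*Real.pi*δ)⁻¹ := by
            have h1' := hWb a ⟨le_refl a, hab⟩
            have h2' := hWb b ⟨hab, le_refl b⟩
            linarith
    · have hcong2 : ∀ x ∈ Set.uIcc a b, ‖u' x‖ = -((2*Real.pi)⁻¹ * (r.eval x / (q.eval x)^2)) := by
        intro x hx
        rw [huIcc] at hx
        rw [hnu', abs_of_nonpos (hneg x hx)]
        ring
      rw [intervalIntegral.integral_congr hcong2, intervalIntegral.integral_neg, hWftc]
      calc -(W b - W a) ≤ |W b - W a| := neg_le_abs _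
        _ ≤ |W b| + |W a| := abs_sub _ _
        _ ≤ 2 * (2*Real.pi*δ)⁻¹ := by
            have h1' := hWb a ⟨le_refl a, hab⟩
            have h2' := hWb b ⟨hab, le_refl b⟩
            linarith
  -- put everything together
  rw [hmain, hibp]
  have hb1 : ‖u b * v b‖ ≤ (2*Real.pi*δ)⁻¹ := by
    rw [norm_mul, hv, ce_norm, mul_one]; exact hub b ⟨hab, le_refl b⟩
  have hb2 : ‖u a * v a‖ ≤ (2*Real.pi*δ)⁻¹ := by
    rw [norm_mul, hv, ce_norm, mul_one]; exact hub a ⟨le_refl a, hab⟩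
  have hb3 : ‖∫ x in a..b, u' x * v x‖ ≤ 2 * (2*Real.pi*δ)⁻¹ := by
    calc ‖∫ x in a..b, u' x * v x‖ ≤ ∫ x in a..b, ‖u' x * v x‖ :=
          intervalIntegral.norm_integral_le_integral_norm hab
      _ ≤ 2 * (2*Real.pi*δ)⁻¹ := hIu'
  have htotal : ‖u b * v b - u a * v a - ∫ x in a..b, u' x * v x‖
      ≤ (2*Real.pi*δ)⁻¹ + (2*Real.pi*δ)⁻¹ + 2 * (2*Real.pi*δ)⁻¹ := by
    calc ‖u b * v b - u a * v a - ∫ x in a..b, u' x * v x‖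
        ≤ ‖u b * v b - u a * v a‖ + ‖∫ x in a..b, u' x * v x‖ := norm_sub_le _ _
      _ ≤ (‖u b * v b‖ + ‖u a * v a‖) + ‖∫ x in a..b, u' x * v x‖ := by
          have := norm_sub_le (u b * v b) (u a * v a); linarith
      _ ≤ (2*Real.pi*δ)⁻¹ + (2*Real.pi*δ)⁻¹ + 2 * (2*Real.pi*δ)⁻¹ := by linarith
  refine htotal.trans ?_
  have hπ3 : (3:ℝ) < Real.pi := Real.pi_gt_three
  have h2πδ : (0:ℝ) < 2*Real.pi*δ := by positivity
  rw [div_eq_mul_inv, one_mul]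
  have : (2*Real.pi*δ)⁻¹ ≤ (4*δ)⁻¹ := by
    apply inv_anti₀ (by positivity)
    nlinarith
  have h4δ : (0:ℝ) < 4*δ := by positivity
  calc (2*Real.pi*δ)⁻¹ + (2*Real.pi*δ)⁻¹ + 2 * (2*Real.pi*δ)⁻¹
      ≤ (4*δ)⁻¹ + (4*δ)⁻¹ + 2 * (4*δ)⁻¹ := by linarith
    _ = δ⁻¹ := by rw [mul_inv]; ring

lemma prod_linear_coeff_bound {ι : Type*} [DecidableEq ι] (s : Finset ι) (v : ι → ℝ)
    (hv : ∀ i ∈ s, |v i| ≤ 1) (k : ℕ) :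
    |((∏ i ∈ s, (X - C (v i))).coeff k)| ≤ 2 ^ s.card := by
  induction s using Finset.induction_on generalizing k with
  | empty =>
    simp only [Finset.prod_empty, Finset.card_empty, pow_zero]
    rcases Nat.eq_zero_or_pos k with h | h
    · simp [h]
    · rw [coeff_one, if_neg (by omega)]
      simp
  | @insert a s' ha ih =>
    have hva : |v a| ≤ 1 := hv a (Finset.mem_insert_self a s')
    have hv' : ∀ i ∈ s', |v i| ≤ 1 := fun i hi => hv i (Finset.mem_insert_of_mem hi)
    rw [Finset.prod_insert ha, Finset.card_insert_of_notMem ha]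
    have hexp : (X - C (v a)) * ∏ i ∈ s', (X - C (v i))
        = X * (∏ i ∈ s', (X - C (v i))) - C (v a) * ∏ i ∈ s', (X - C (v i)) := by
      ring
    rw [hexp]
    rcases k with _ | k
    · rw [coeff_sub, mul_coeff_zero, coeff_X_zero, zero_mul, zero_sub, abs_neg, coeff_C_mul,
        abs_mul]
      calc |v a| * |(∏ i ∈ s', (X - C (v i))).coeff 0| ≤ 1 * 2 ^ s'.card :=
            mul_le_mul hva (ih hv' 0) (abs_nonneg _) zero_le_one
        _ ≤ 2 ^ (s'.card + 1) := by rw [one_mul]; exact pow_le_pow_right₀ (by norm_num) (Nat.le_succ _)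
    · rw [coeff_sub, coeff_X_mul, coeff_C_mul]
      calc |(∏ i ∈ s', (X - C (v i))).coeff k - v a * (∏ i ∈ s', (X - C (v i))).coeff (k+1)|
          ≤ |(∏ i ∈ s', (X - C (v i))).coeff k| + |v a * (∏ i ∈ s', (X - C (v i))).coeff (k+1)| :=
            abs_sub _ _
        _ ≤ 2 ^ s'.card + 1 * 2 ^ s'.card := by
            have h1 := ih hv' k
            have h2 := ih hv' (k+1)
            have h3 : |v a * (∏ i ∈ s', (X - C (v i))).coeff (k+1)| ≤ 1 * 2 ^ s'.card := by
              rw [abs_mul]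
              exact mul_le_mul hva h2 (abs_nonneg _) zero_le_one
            linarith
        _ = 2 ^ (s'.card + 1) := by ring

lemma exists_sep_points (E : Set ℝ) (hcl : IsClosed E) (hE1 : E ⊆ Icc 0 1) (n : ℕ)
    (hpos : 0 < (volume E).toReal) :
    ∃ x : Fin (n+1) → ℝ, (∀ i, x i ∈ E) ∧
      ∀ i j : Fin (n+1), i < j → ((j:ℕ) - (i:ℕ) : ℕ) * ((volume E).toReal / (n+1)) ≤ x j - x i := by
  set ε := (volume E).toReal with hε
  have hfin : volume E ≠ ⊤ := by
    have : volume E ≤ volume (Icc (0:ℝ) 1) := measure_mono hE1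
    rw [Real.volume_Icc] at this
    exact ne_top_of_le_ne_top (by simp) this
  have hmeas : MeasurableSet E := hcl.measurableSet
  set F : ℝ → ℝ := fun t => (volume (E ∩ Iic t)).toReal with hF
  have hfint : ∀ t, volume (E ∩ Iic t) ≠ ⊤ := fun t =>
    ne_top_of_le_ne_top hfin (measure_mono Set.inter_subset_left)
  have hFmono : Monotone F := by
    intro s t hst
    exact ENNReal.toReal_mono (hfint t) (measure_mono (inter_subset_inter_right _ (Iic_subset_Iic.mpr hst)))
  have hFlip : ∀ s t : ℝ, s ≤ t → F t ≤ F s + (t - s) := by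
    intro s t hst
    have hsub : E ∩ Iic t ⊆ (E ∩ Iic s) ∪ Ioc s t := by
      rintro y ⟨hy1, hy2⟩
      rcases le_or_gt y s with h | h
      · exact Or.inl ⟨hy1, h⟩
      · exact Or.inr ⟨h, hy2⟩
    have h1 : volume (E ∩ Iic t) ≤ volume (E ∩ Iic s) + volume (Ioc s t) :=
      le_trans (measure_mono hsub) (measure_union_le _ _)
    have h2 : volume (Ioc s t) = ENNReal.ofReal (t - s) := Real.volume_Ioc
    rw [h2] at h1
    have := ENNReal.toReal_mono (by
      exact ENNReal.add_ne_top.mpr ⟨hfint s, ENNReal.ofReal_ne_top⟩) h1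
    rw [ENNReal.toReal_add (hfint s) ENNReal.ofReal_ne_top,
      ENNReal.toReal_ofReal (by linarith)] at this
    exact this
  have hFcont : Continuous F := by
    apply LipschitzWith.continuous (K := 1)
    apply LipschitzWith.of_dist_le_mul
    intro s t
    rw [Real.dist_eq, Real.dist_eq]
    rw [NNReal.coe_one, one_mul]
    rcases le_total s t with h | h
    · have h1 := hFlip s t h
      have h2 := hFmono h
      rw [abs_of_nonpos (by linarith), abs_of_nonpos (by linarith)]
      linarith
    · have h1 := hFlip t s h
      have h2 := hFmono h
      rw [abs_of_nonneg (by linarith), abs_of_nonneg (by linarith)]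
      linarith
  have hF0 : ∀ t ≤ 0, F t = 0 := by
    intro t ht
    have : E ∩ Iic t ⊆ {0} := by
      rintro y ⟨hy1, hy2⟩
      have := hE1 hy1
      simp only [mem_Icc] at this
      simp only [mem_Iic] at hy2
      simp only [mem_singleton_iff]
      linarith
    have h0 : volume (E ∩ Iic t) = 0 := measure_mono_null this (by simp)
    simp [hF, h0]
  have hF1 : F 1 = ε := by
    have : E ∩ Iic 1 = E := by
      apply inter_eq_left.mpr
      intro y hy; exact (hE1 hy).2
    rw [hF]; simp only [this]; exact hε.symm
  -- the thresholds
  set v : Fin (n+1) → ℝ := fun i => ((i:ℕ) + 1) * (ε / (n+1)) with hv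
  have hvpos : ∀ i, 0 < v i := by
    intro i; apply mul_pos; positivity; positivity
  have hvle : ∀ i, v i ≤ ε := by
    intro i
    have hi : ((i:ℕ) : ℝ) + 1 ≤ (n : ℝ) + 1 := by
      have := Nat.lt_succ_iff.mp i.2
      exact_mod_cast Nat.succ_le_succ this
    calc v i ≤ ((n:ℝ)+1) * (ε/(n+1)) :=
          mul_le_mul_of_nonneg_right hi (by positivity)
      _ = ε := by field_simp
  -- the sets and the points
  set S : Fin (n+1) → Set ℝ := fun i => {t | v i ≤ F t} with hS
  have hne : ∀ i, (1:ℝ) ∈ S i := by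
    intro i; simp only [hS, mem_setOf_eq, hF1]; exact hvle i
  have hbdd : ∀ i, BddBelow (S i) := by
    intro i
    refine ⟨0, fun t ht => ?_⟩
    by_contra h
    push_neg at h
    have := hF0 t (le_of_lt h)
    simp only [hS, mem_setOf_eq] at ht
    rw [this] at ht
    exact absurd ht (not_le.mpr (hvpos i))
  set x : Fin (n+1) → ℝ := fun i => sInf (S i) with hx
  have hxF : ∀ i, F (x i) = v i := by
    intro i
    apply le_antisymm
    · by_contra h
      push_neg at h
      have hopen : IsOpen (F ⁻¹' Ioi (v i)) := isOpen_Ioi.preimage hFcont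
      obtain ⟨η, hη, hball⟩ := Metric.isOpen_iff.mp hopen (x i) h
      have hmem : x i - η/2 ∈ S i := by
        have : x i - η/2 ∈ Metric.ball (x i) η := by
          rw [Metric.mem_ball, Real.dist_eq, abs_sub_lt_iff]
          constructor <;> linarith
        have := hball this
        simp only [mem_preimage, mem_Ioi] at this
        exact le_of_lt this
      have hcontr : x i ≤ x i - η/2 := csInf_le (hbdd i) hmem
      linarith
    · by_contra h
      push_neg at h
      have hopen : IsOpen (F ⁻¹' Iio (v i)) := isOpen_Iio.preimage hFcont
      obtain ⟨η, hη, hball⟩ := Metric.isOpen_iff.mp hopen (x i) h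
      obtain ⟨t, htS, htlt⟩ := exists_lt_of_csInf_lt ⟨1, hne i⟩
        (show sInf (S i) < x i + η from lt_add_of_pos_right _ hη)
      have hxt : x i ≤ t := csInf_le (hbdd i) htS
      have : t ∈ Metric.ball (x i) η := by
        rw [Metric.mem_ball, Real.dist_eq, abs_sub_lt_iff]
        constructor <;> linarith
      have := hball this
      simp only [mem_preimage, mem_Iio] at this
      simp only [hS, mem_setOf_eq] at htS
      linarith
  have hxE : ∀ i, x i ∈ E := by
    intro i
    by_contra hxe
    obtain ⟨η, hη, hball⟩ := Metric.isOpen_iff.mp hcl.isOpen_compl (x i) hxe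
    have hnull : volume (E ∩ Ioc (x i - η/2) (x i)) = 0 := by
      have : E ∩ Ioc (x i - η/2) (x i) = ∅ := by
        rw [eq_empty_iff_forall_notMem]
        rintro y ⟨hy1, hy2, hy3⟩
        have : y ∈ Metric.ball (x i) η := by
          simp [Real.dist_eq, abs_sub_lt_iff]
          constructor <;> linarith
        exact (hball this) hy1
      rw [this]; simp
    have hle : F (x i) ≤ F (x i - η/2) := by
      have hsub : E ∩ Iic (x i) ⊆ (E ∩ Iic (x i - η/2)) ∪ (E ∩ Ioc (x i - η/2) (x i)) := by
        rintro y ⟨hy1, hy2⟩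
        rcases le_or_gt y (x i - η/2) with h | h
        · exact Or.inl ⟨hy1, h⟩
        · exact Or.inr ⟨hy1, h, hy2⟩
      have h1 : volume (E ∩ Iic (x i)) ≤ volume (E ∩ Iic (x i - η/2)) := by
        calc volume (E ∩ Iic (x i)) ≤ volume ((E ∩ Iic (x i - η/2)) ∪ (E ∩ Ioc (x i - η/2) (x i))) :=
              measure_mono hsub
          _ ≤ volume (E ∩ Iic (x i - η/2)) + volume (E ∩ Ioc (x i - η/2) (x i)) :=
              measure_union_le _ _
          _ = volume (E ∩ Iic (x i - η/2)) := by rw [hnull, add_zero]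
      exact ENNReal.toReal_mono (hfint _) h1
    have hmem : x i - η/2 ∈ S i := by
      simp only [hS, mem_setOf_eq]
      rw [← hxF i] at *
      linarith
    have hcontr : x i ≤ x i - η/2 := csInf_le (hbdd i) hmem
    linarith
  refine ⟨x, hxE, ?_⟩
  intro i j hij
  have hvij : v j - v i = (((j:ℕ) - (i:ℕ) : ℕ) : ℝ) * (ε / (n+1)) := by
    rw [Nat.cast_sub (le_of_lt hij)]
    simp only [hv]
    ring
  have hxij : x i ≤ x j := by
    apply csInf_le_csInf (hbdd i) ⟨1, hne j⟩
    intro t ht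
    simp only [hS, mem_setOf_eq] at ht ⊢
    have : v i ≤ v j := by
      simp only [hv]
      apply mul_le_mul_of_nonneg_right _ (by positivity)
      have : (i:ℕ) ≤ (j:ℕ) := le_of_lt hij
      exact_mod_cast Nat.succ_le_succ this
    linarith
  have := hFlip (x i) (x j) hxij
  rw [hxF i, hxF j] at this
  rw [← hvij]
  linarith

-- assume pieces available
lemma sublevel_bound (n : ℕ) (hn : 1 ≤ n) :
    ∃ C : ℝ, 0 < C ∧ ∀ Q : ℝ[X], Q.natDegree ≤ n → ∀ k : ℕ, Q.coeff k ≠ 0 → ∀ δ : ℝ, 0 ≤ δ →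
      (volume {x ∈ Icc (0:ℝ) 1 | |Q.eval x| ≤ δ}).toReal
        ≤ C * (δ / |Q.coeff k|) ^ (1/(n:ℝ)) := by
  classical
  refine ⟨(((n:ℝ)+1)^(n+1) * 2^n) ^ (1/(n:ℝ)), by positivity, ?_⟩
  intro Q hdeg k hk δ hδ
  set c := Q.coeff k with hc
  set E := {x ∈ Icc (0:ℝ) 1 | |Q.eval x| ≤ δ} with hE
  have hcl : IsClosed E := by
    have : E = Icc (0:ℝ) 1 ∩ {x | |Q.eval x| ≤ δ} := rfl
    rw [this]
    exact isClosed_Icc.inter (isClosed_le (continuous_abs.comp Q.continuous) continuous_const)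
  have hE1 : E ⊆ Icc 0 1 := fun x hx => hx.1
  set ε := (volume E).toReal with hε
  have hεnn : 0 ≤ ε := ENNReal.toReal_nonneg
  rcases eq_or_lt_of_le hεnn with h0 | hpos
  · rw [← h0]
    positivity
  · -- main case
    obtain ⟨x, hxE, hgap⟩ := exists_sep_points E hcl hE1 n hpos
    set ρ := ε / (n+1) with hρ
    have hρpos : 0 < ρ := by positivity
    have hsep : ∀ i j : Fin (n+1), i ≠ j → ρ ≤ |x i - x j| := by
      intro i j hij
      rcases lt_or_gt_of_ne hij with h | h
      · have := hgap i j h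
        have h1 : (1:ℝ) ≤ (((j:ℕ) - (i:ℕ) : ℕ) : ℝ) := by
          have : 1 ≤ (j:ℕ) - (i:ℕ) := by omega
          exact_mod_cast this
        rw [abs_sub_comm, abs_of_nonneg (by nlinarith)]
        nlinarith
      · have := hgap j i h
        have h1 : (1:ℝ) ≤ (((i:ℕ) - (j:ℕ) : ℕ) : ℝ) := by
          have : 1 ≤ (i:ℕ) - (j:ℕ) := by omega
          exact_mod_cast this
        rw [abs_of_nonneg (by nlinarith)]
        nlinarith
    have hinj : Set.InjOn x (Finset.univ : Finset (Fin (n+1))) := by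
      intro i _ j _ h
      by_contra hne
      have := hsep i j hne
      rw [h] at this
      simp at this
      linarith
    have hdeg' : Q.degree < ((Finset.univ : Finset (Fin (n+1))).card : WithBot ℕ) := by
      rw [Finset.card_univ, Fintype.card_fin]
      apply lt_of_le_of_lt Q.degree_le_natDegree
      exact_mod_cast Nat.lt_succ_of_le hdeg
    have hinterp := Lagrange.eq_interpolate hinj hdeg'
    -- coefficient bound
    have hcoeff : |c| ≤ (n+1) * (δ * (2^n / ρ^n)) := by
      have hQk : Q.coeff k = ∑ i : Fin (n+1), Q.eval (x i) * (Lagrange.basis Finset.univ x i).coeff k := by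
        conv_lhs => rw [hinterp]
        rw [Lagrange.interpolate_apply, Polynomial.finset_sum_coeff]
        congr 1; ext i
        rw [Polynomial.coeff_C_mul]
      rw [hc, hQk]
      have hterm : ∀ i : Fin (n+1), |Q.eval (x i) * (Lagrange.basis Finset.univ x i).coeff k|
          ≤ δ * (2^n / ρ^n) := by
        intro i
        have hxi := hxE i
        have hevi : |Q.eval (x i)| ≤ δ := hxi.2
        have hbasis : |(Lagrange.basis Finset.univ x i).coeff k| ≤ 2^n / ρ^n := by
          have hbeq : Lagrange.basis Finset.univ x i
              = C (∏ j ∈ Finset.univ.erase i, (x i - x j)⁻¹)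
                * ∏ j ∈ Finset.univ.erase i, (X - C (x j)) := by
            rw [Lagrange.basis]
            simp only [Lagrange.basisDivisor]
            rw [Finset.prod_mul_distrib, ← map_prod]
          rw [hbeq, Polynomial.coeff_C_mul, abs_mul]
          have hcard : (Finset.univ.erase i).card = n := by
            rw [Finset.card_erase_of_mem (Finset.mem_univ i), Finset.card_univ,
              Fintype.card_fin]
            omega
          have h1 : |∏ j ∈ Finset.univ.erase i, (x i - x j)⁻¹| ≤ (ρ⁻¹)^n := by
            rw [Finset.abs_prod]
            calc ∏ j ∈ Finset.univ.erase i, |(x i - x j)⁻¹|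
                ≤ ∏ _j ∈ Finset.univ.erase i, ρ⁻¹ := by
                  apply Finset.prod_le_prod (fun j _ => abs_nonneg _)
                  intro j hj
                  rw [abs_inv]
                  apply inv_anti₀ hρpos
                  exact hsep i j (fun h => (Finset.ne_of_mem_erase hj) h.symm)
              _ = (ρ⁻¹)^n := by rw [Finset.prod_const, hcard]
          have h2 : |(∏ j ∈ Finset.univ.erase i, (X - C (x j))).coeff k| ≤ 2^n := by
            have := prod_linear_coeff_bound (Finset.univ.erase i) x
              (fun j _ => by
                have := hxE j
                have h1 := (hE1 this).1
                have h2 := (hE1 this).2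
                rw [abs_le]; constructor <;> linarith) k
            rwa [hcard] at this
          calc |∏ j ∈ Finset.univ.erase i, (x i - x j)⁻¹|
                * |(∏ j ∈ Finset.univ.erase i, (X - C (x j))).coeff k|
              ≤ (ρ⁻¹)^n * 2^n := by
                apply mul_le_mul h1 h2 (abs_nonneg _) (by positivity)
            _ = 2^n / ρ^n := by
                rw [inv_pow]
                ring
        calc |Q.eval (x i) * (Lagrange.basis Finset.univ x i).coeff k|
            = |Q.eval (x i)| * |(Lagrange.basis Finset.univ x i).coeff k| := abs_mul _ _
          _ ≤ δ * (2^n / ρ^n) := by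
              apply mul_le_mul hevi hbasis (abs_nonneg _) hδ
      calc |∑ i : Fin (n+1), Q.eval (x i) * (Lagrange.basis Finset.univ x i).coeff k|
          ≤ ∑ i : Fin (n+1), |Q.eval (x i) * (Lagrange.basis Finset.univ x i).coeff k| :=
            Finset.abs_sum_le_sum_abs _ _
        _ ≤ ∑ _i : Fin (n+1), δ * (2^n / ρ^n) := Finset.sum_le_sum (fun i _ => hterm i)
        _ = (n+1) * (δ * (2^n / ρ^n)) := by
            rw [Finset.sum_const, Finset.card_univ, Fintype.card_fin]
            push_cast; ring
    -- conclude by rpow algebra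
    have hcpos : 0 < |c| := abs_pos.mpr hk
    have hρn : ρ^n * |c| ≤ (n+1) * 2^n * δ := by
      have hρnpos : 0 < ρ^n := pow_pos hρpos n
      have heq : ((n:ℝ)+1) * (δ*(2^n/ρ^n)) = (((n:ℝ)+1)*2^n*δ)/ρ^n := by
        field_simp
      rw [heq, le_div_iff₀ hρnpos] at hcoeff
      calc ρ^n * |c| = |c| * ρ^n := mul_comm _ _
        _ ≤ ((n:ℝ)+1)*2^n*δ := hcoeff
    have hεn : ε^n ≤ (((n:ℝ)+1)^(n+1) * 2^n) * (δ/|c|) := by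
      have hεeq : ε = ((n:ℝ)+1) * ρ := by rw [hρ]; field_simp
      rw [hεeq, mul_pow]
      have hgoal : (((n:ℝ)+1)^(n+1) * 2^n) * (δ/|c|) = ((((n:ℝ)+1)^(n+1) * 2^n) * δ)/|c| := by
        ring
      rw [hgoal, le_div_iff₀ hcpos]
      have h2 : ((n:ℝ)+1)^n * (ρ^n * |c|) ≤ ((n:ℝ)+1)^n * (((n:ℝ)+1) * 2^n * δ) :=
        mul_le_mul_of_nonneg_left hρn (by positivity)
      have hpow : ((n:ℝ)+1)^(n+1) = ((n:ℝ)+1)^n * ((n:ℝ)+1) := pow_succ _ _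
      rw [hpow]
      nlinarith [h2]
    have hn0 : (n:ℝ) ≠ 0 := by
      have : (0:ℝ) < n := by exact_mod_cast hn
      linarith
    have h1 : ε = ((ε^n : ℝ)) ^ (1/(n:ℝ)) := by
      rw [← Real.rpow_natCast ε n, ← Real.rpow_mul hεnn]
      rw [mul_one_div, div_self hn0, Real.rpow_one]
    rw [h1, ← Real.mul_rpow (by positivity) (by positivity)]
    apply Real.rpow_le_rpow (by positivity) hεn (by positivity)

lemma sign_const {f : ℝ → ℝ} (hf : Continuous f) {u v : ℝ} (huv : u < v)
    (h0 : ∀ x ∈ Ioo u v, f x ≠ 0) :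
    (∀ x ∈ Ioo u v, 0 < f x) ∨ (∀ x ∈ Ioo u v, f x < 0) := by
  by_contra hcon
  push_neg at hcon
  obtain ⟨⟨a, ha, hfa⟩, ⟨b, hb, hfb⟩⟩ := hcon
  have hfa' : f a < 0 := lt_of_le_of_ne hfa (h0 a ha)
  have hfb' : 0 < f b := lt_of_le_of_ne hfb (Ne.symm (h0 b hb))
  have hsub : Set.uIcc a b ⊆ Ioo u v := by
    exact Set.ordConnected_Ioo.uIcc_subset ha hb
  have h0mem : (0:ℝ) ∈ Set.uIcc (f a) (f b) := by
    rw [Set.mem_uIcc]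
    left; exact ⟨le_of_lt hfa', le_of_lt hfb'⟩
  obtain ⟨z, hz, hz0⟩ := intermediate_value_uIcc (hf.continuousOn) h0mem
  exact h0 z (hsub hz) hz0

lemma ge_of_Ioo {f : ℝ → ℝ} (hf : Continuous f) {u v c : ℝ} (huv : u < v)
    (h : ∀ x ∈ Ioo u v, c ≤ f x) : ∀ x ∈ Icc u v, c ≤ f x := by
  intro x hx
  have hcl : closure (Ioo u v) = Icc u v := closure_Ioo (ne_of_lt huv)
  have hsub : Ioo u v ⊆ {y | c ≤ f y} := h
  have hclosed : IsClosed {y | c ≤ f y} := isClosed_le continuous_const hf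
  have := closure_minimal hsub hclosed
  rw [hcl] at this
  exact this hx

lemma le_of_Ioo {f : ℝ → ℝ} (hf : Continuous f) {u v c : ℝ} (huv : u < v)
    (h : ∀ x ∈ Ioo u v, f x ≤ c) : ∀ x ∈ Icc u v, f x ≤ c := by
  intro x hx
  have hcl : closure (Ioo u v) = Icc u v := closure_Ioo (ne_of_lt huv)
  have hclosed : IsClosed {y | f y ≤ c} := isClosed_le hf continuous_const
  have := closure_minimal (show Ioo u v ⊆ {y | f y ≤ c} from h) hclosed
  rw [hcl] at this
  exact this hx

lemma sum_vol_Ioc (B : Set ℝ) (hB : MeasurableSet B) (y : ℕ → ℝ) (hy : Monotone y) (k : ℕ) :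
    ∑ i ∈ Finset.range k, volume (B ∩ Ioc (y i) (y (i+1))) = volume (B ∩ Ioc (y 0) (y k)) := by
  induction k with
  | zero => simp
  | succ k ih =>
    rw [Finset.sum_range_succ, ih]
    have hun : Ioc (y 0) (y k) ∪ Ioc (y k) (y (k+1)) = Ioc (y 0) (y (k+1)) :=
      Set.Ioc_union_Ioc_eq_Ioc (hy (Nat.zero_le k)) (hy (Nat.le_succ k))
    rw [← hun, Set.inter_union_distrib_left]
    rw [measure_union _ (hB.inter measurableSet_Ioc)]
    apply Set.disjoint_of_subset inter_subset_right inter_subset_right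
    rw [Set.disjoint_left]
    intro x hx1 hx2
    exact absurd hx2.1 (not_lt.mpr hx1.2)

lemma core_bound (d : ℕ) (hd : 1 ≤ d) :
    ∃ C : ℝ, 0 < C ∧ ∀ p : ℝ[X], p.natDegree ≤ d → ∀ m : ℕ, 1 ≤ m → m ≤ d → p.coeff m ≠ 0 →
      ‖∫ x in (0:ℝ)..1, ce (p.eval x)‖ ≤ C * |p.coeff m| ^ (-(1/(d:ℝ))) := by
  classical
  obtain ⟨C₁, hC₁, hsub⟩ := sublevel_bound (max (d-1) 1) (le_max_right _ _)
  refine ⟨C₁ + (3*(d:ℝ) + 3) + 1, by positivity, ?_⟩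
  intro p hdeg m hm1 hmd hc0
  set c := p.coeff m with hcdef
  have hcabs : 0 < |c| := abs_pos.mpr hc0
  have hcont : Continuous (fun x : ℝ => ce (p.eval x)) := by
    apply Complex.continuous_exp.comp
    exact continuous_const.mul (continuous_const.mul (Complex.continuous_ofReal.comp p.continuous))
  have hint : ∀ A B : ℝ, IntervalIntegrable (fun x => ce (p.eval x)) volume A B :=
    fun A B => hcont.intervalIntegrable A B
  have hd0 : (0:ℝ) < d := by exact_mod_cast hd
  have hrpos : (0:ℝ) < |c| ^ (-(1/(d:ℝ))) := Real.rpow_pos_of_pos hcabs _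
  by_cases hc1 : |c| ≤ 1
  · -- trivial bound
    have h1 : ‖∫ x in (0:ℝ)..1, ce (p.eval x)‖ ≤ 1 := by
      have := intervalIntegral.norm_integral_le_of_norm_le_const
        (C := 1) (f := fun x => ce (p.eval x)) (a := 0) (b := 1)
        (fun x _ => le_of_eq (ce_norm _))
      simpa using this
    have h2 : (1:ℝ) ≤ |c| ^ (-(1/(d:ℝ))) := by
      rw [Real.rpow_neg (abs_nonneg c)]
      rw [one_le_inv_iff₀]
      exact ⟨Real.rpow_pos_of_pos hcabs _, Real.rpow_le_one (abs_nonneg c) hc1 (by positivity)⟩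
    calc ‖∫ x in (0:ℝ)..1, ce (p.eval x)‖ ≤ 1 := h1
      _ ≤ 1 * |c| ^ (-(1/(d:ℝ))) := by linarith
      _ ≤ (C₁ + (3*(d:ℝ) + 3) + 1) * |c| ^ (-(1/(d:ℝ))) := by
          apply mul_le_mul_of_nonneg_right _ (le_of_lt hrpos)
          linarith [hC₁, hd0]
  · push_neg at hc1
    set δ := |c| ^ (1/(d:ℝ)) with hδdef
    have hδpos : 0 < δ := Real.rpow_pos_of_pos hcabs _
    have hδ1 : 1 ≤ δ := by
      calc (1:ℝ) = 1 ^ (1/(d:ℝ)) := (Real.one_rpow _).symm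
        _ ≤ δ := Real.rpow_le_rpow zero_le_one (le_of_lt hc1) (by positivity)
    have hδc : δ ≤ |c| := by
      calc δ = |c| ^ (1/(d:ℝ)) := rfl
        _ ≤ |c| ^ (1:ℝ) := Real.rpow_le_rpow_of_exponent_le (le_of_lt hc1)
            (by rw [div_le_one hd0]; exact_mod_cast hd)
        _ = |c| := Real.rpow_one _
    have hδinv : 1/δ = |c| ^ (-(1/(d:ℝ))) := by
      rw [Real.rpow_neg (abs_nonneg c), one_div]
    obtain ⟨mm, rfl⟩ : ∃ mm, m = mm + 1 := ⟨m - 1, by omega⟩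
    set q := derivative p with hqdef
    have hqc : q.coeff mm = c * ((mm:ℝ) + 1) := by
      rw [hqdef, coeff_derivative]
    have hqc0 : q.coeff mm ≠ 0 := by
      rw [hqc]; exact mul_ne_zero hc0 (by positivity)
    have hqcge : |c| ≤ |q.coeff mm| := by
      rw [hqc, abs_mul]
      have h1 : (1:ℝ) ≤ |(mm:ℝ) + 1| := by
        rw [abs_of_pos (by positivity)]
        have : (0:ℝ) ≤ mm := Nat.cast_nonneg mm
        linarith
      nlinarith [abs_nonneg c]
    by_cases hqdeg : q.natDegree = 0
    · -- q constant
      have hq := eq_C_of_natDegree_eq_zero hqdeg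
      have hmm0 : mm = 0 := by
        by_contra h
        have : q.coeff mm = 0 := by rw [hq, coeff_C, if_neg h]
        exact hqc0 this
      subst hmm0
      have hqc' : q.coeff 0 = c := by rw [hqc]; push_cast; ring
      have hosc := osc_bound p 0 1 δ zero_le_one hδpos ?_ ?_
      · calc ‖∫ x in (0:ℝ)..1, ce (p.eval x)‖ ≤ 1/δ := hosc
          _ = |c| ^ (-(1/(d:ℝ))) := hδinv
          _ ≤ (C₁ + (3*(d:ℝ) + 3) + 1) * |c| ^ (-(1/(d:ℝ))) := by
              nlinarith [hrpos, hC₁, hd0]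
      · intro x _
        rw [← hqdef, hq, eval_C, hqc']
        exact hδc
      · left
        intro x _
        rw [← hqdef, hq, derivative_C, eval_zero]
    · -- main case
      have hq1 : 1 ≤ q.natDegree := Nat.pos_of_ne_zero hqdeg
      have hqd : q.natDegree ≤ d - 1 := le_trans (natDegree_derivative_le p) (by omega)
      have hd2 : 2 ≤ d := by omega
      have hn₁ : max (d-1) 1 = d - 1 := by omega
      set r := derivative q with hrdef
      have hr0 : r ≠ 0 := fun hzero => hqdeg (natDegree_eq_zero_of_derivative_eq_zero hzero)
      have hqsubne : q - C δ ≠ 0 := by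
        intro h
        have hqe : q = C δ := by rwa [sub_eq_zero] at h
        rw [hqe, natDegree_C] at hq1; omega
      have hqaddne : q + C δ ≠ 0 := by
        intro h
        have hqe : q = -C δ := eq_neg_of_add_eq_zero_left h
        rw [hqe, ← C_neg, natDegree_C] at hq1; omega
      set S := (q - C δ) * (q + C δ) * r with hSdef
      have hSne : S ≠ 0 := mul_ne_zero (mul_ne_zero hqsubne hqaddne) hr0
      have hSdeg : S.natDegree ≤ 3*d := by
        have h1 : (q - C δ).natDegree ≤ d := le_trans (natDegree_sub_le _ _)
          (by rw [natDegree_C]; simp; omega)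
        have h2 : (q + C δ).natDegree ≤ d := le_trans (natDegree_add_le _ _)
          (by rw [natDegree_C]; simp; omega)
        have h3 : r.natDegree ≤ d := le_trans (natDegree_derivative_le q) (by omega)
        calc S.natDegree ≤ ((q - C δ) * (q + C δ)).natDegree + r.natDegree := natDegree_mul_le
          _ ≤ ((q - C δ).natDegree + (q + C δ).natDegree) + r.natDegree := by
              have := natDegree_mul_le (p := q - C δ) (q := q + C δ); omega
          _ ≤ 3*d := by omega
      set Z := insert (0:ℝ) (insert (1:ℝ)
        (S.roots.toFinset.filter (fun z => 0 ≤ z ∧ z ≤ 1))) with hZdef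
      have hZ0 : (0:ℝ) ∈ Z := Finset.mem_insert_self _ _
      have hZ1 : (1:ℝ) ∈ Z := Finset.mem_insert_of_mem (Finset.mem_insert_self _ _)
      have hZsub : ∀ z ∈ Z, z ∈ Icc (0:ℝ) 1 := by
        intro z hz
        rw [hZdef] at hz
        rcases Finset.mem_insert.mp hz with h | h
        · rw [h]; exact ⟨le_refl 0, zero_le_one⟩
        rcases Finset.mem_insert.mp h with h' | h'
        · rw [h']; exact ⟨zero_le_one, le_refl 1⟩
        · have := (Finset.mem_filter.mp h').2
          exact ⟨this.1, this.2⟩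
      set K := Z.card with hKdef
      have hKpos : 0 < K := Finset.card_pos.mpr ⟨0, hZ0⟩
      have hKbound : K ≤ 3*d + 2 := by
        have h1 : K ≤ (S.roots.toFinset.filter (fun z => 0 ≤ z ∧ z ≤ 1)).card + 2 := by
          rw [hKdef, hZdef]
          calc (insert (0:ℝ) (insert (1:ℝ) (S.roots.toFinset.filter _))).card
              ≤ (insert (1:ℝ) (S.roots.toFinset.filter (fun z => 0 ≤ z ∧ z ≤ 1))).card + 1 :=
                Finset.card_insert_le _ _
            _ ≤ (S.roots.toFinset.filter (fun z => 0 ≤ z ∧ z ≤ 1)).card + 1 + 1 := by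
                have := Finset.card_insert_le (1:ℝ) (S.roots.toFinset.filter (fun z => 0 ≤ z ∧ z ≤ 1))
                omega
            _ = _ + 2 := by omega
        have h2 : (S.roots.toFinset.filter (fun z => 0 ≤ z ∧ z ≤ 1)).card ≤ 3*d := by
          calc (S.roots.toFinset.filter (fun z => 0 ≤ z ∧ z ≤ 1)).card
              ≤ S.roots.toFinset.card := Finset.card_filter_le _ _
            _ ≤ Multiset.card S.roots := Multiset.toFinset_card_le _
            _ ≤ S.natDegree := S.card_roots'
            _ ≤ 3*d := hSdeg
        omega
      set e := Z.orderIsoOfFin rfl with hedef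
      set y : ℕ → ℝ := fun i => if h : i < K then (e ⟨i, h⟩ : ℝ) else 1 with hydef
      have hyZ : ∀ i (h : i < K), y i ∈ Z := by
        intro i h
        rw [hydef]
        simp only [dif_pos h]
        exact (e ⟨i, h⟩).2
      have hy01 : ∀ i, y i ∈ Icc (0:ℝ) 1 := by
        intro i
        by_cases h : i < K
        · exact hZsub _ (hyZ i h)
        · rw [hydef]; simp only [dif_neg h]; exact ⟨zero_le_one, le_refl 1⟩
      have hymono : Monotone y := by
        intro i j hij
        by_cases hj : j < K
        · have hi : i < K := lt_of_le_of_lt hij hj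
          rw [hydef]
          simp only [dif_pos hi, dif_pos hj]
          have : (⟨i, hi⟩ : Fin K) ≤ ⟨j, hj⟩ := by rw [Fin.mk_le_mk]; exact hij
          exact Subtype.coe_le_coe.mpr (e.monotone this)
        · have h1 : y j = 1 := by rw [hydef]; simp only [dif_neg hj]
          rw [h1]
          exact (hy01 i).2
      have hy0 : y 0 = 0 := by
        have h0K : 0 < K := hKpos
        apply le_antisymm
        · set k := e.symm ⟨0, hZ0⟩ with hk
          have hle : (⟨0, h0K⟩ : Fin K) ≤ k := by rw [Fin.le_def]; exact Nat.zero_le _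
          have := Subtype.coe_le_coe.mpr (e.monotone hle)
          rw [hk] at this
          simp only [OrderIso.apply_symm_apply] at this
          rw [hydef]; simp only [dif_pos h0K]
          exact this
        · exact (hy01 0).1
      have hylast : y (K-1) = 1 := by
        have hK1 : K - 1 < K := by omega
        apply le_antisymm
        · exact (hy01 _).2
        · set k := e.symm ⟨1, hZ1⟩ with hk
          have hle : k ≤ (⟨K-1, hK1⟩ : Fin K) := by
            rw [Fin.le_def]
            have := k.isLt
            simp only [Fin.val_mk] at *
            omega
          have := Subtype.coe_le_coe.mpr (e.monotone hle)
          rw [hk] at this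
          simp only [OrderIso.apply_symm_apply] at this
          rw [hydef]; simp only [dif_pos hK1]
          exact this
      have hyroot : ∀ i, ∀ x ∈ Ioo (y i) (y (i+1)), S.eval x ≠ 0 := by
        intro i x hx hSx
        have hx0 : 0 < x := lt_of_le_of_lt (hy01 i).1 hx.1
        have hx1 : x < 1 := lt_of_lt_of_le hx.2 (hy01 (i+1)).2
        have hxZ : x ∈ Z := by
          rw [hZdef]
          apply Finset.mem_insert_of_mem
          apply Finset.mem_insert_of_mem
          rw [Finset.mem_filter]
          refine ⟨Multiset.mem_toFinset.mpr (mem_roots'.mpr ⟨hSne, hSx⟩), le_of_lt hx0, le_of_lt hx1⟩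
        have hiK : i < K := by
          by_contra h
          have : y i = 1 := by rw [hydef]; simp only [dif_neg h]
          rw [this] at hx
          linarith [hx.1]
        set k := e.symm ⟨x, hxZ⟩ with hk
        have hxk : ((e k : Z) : ℝ) = x := by rw [hk]; simp only [OrderIso.apply_symm_apply]
        have hik : i < (k : ℕ) := by
          have h1 : y i < ((e k : Z) : ℝ) := by rw [hxk]; exact hx.1
          rw [hydef] at h1
          simp only [dif_pos hiK] at h1
          have := Subtype.coe_lt_coe.mp h1
          have h2 : (⟨i, hiK⟩ : Fin K) < k := e.lt_iff_lt.mp this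
          exact h2
        by_cases hi1 : i + 1 < K
        · have h1 : ((e k : Z) : ℝ) < y (i+1) := by rw [hxk]; exact hx.2
          rw [hydef] at h1
          simp only [dif_pos hi1] at h1
          have := Subtype.coe_lt_coe.mp h1
          have h2 : k < (⟨i+1, hi1⟩ : Fin K) := e.lt_iff_lt.mp this
          have := Fin.lt_def.mp h2
          simp only [Fin.val_mk] at this
          omega
        · have := k.isLt
          omega
      -- the bad set
      set B := {x ∈ Icc (0:ℝ) 1 | |q.eval x| ≤ δ} with hBdef
      have hBcl : IsClosed B := by
        have : B = Icc (0:ℝ) 1 ∩ {x | |q.eval x| ≤ δ} := rfl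
        rw [this]
        exact isClosed_Icc.inter (isClosed_le (continuous_abs.comp q.continuous) continuous_const)
      have hBmeas : MeasurableSet B := hBcl.measurableSet
      have hBfin : volume B ≠ ⊤ := by
        have : volume B ≤ volume (Icc (0:ℝ) 1) := measure_mono (fun x hx => hx.1)
        rw [Real.volume_Icc] at this
        exact ne_top_of_le_ne_top (by simp) this
      -- per-interval bound
      have hper : ∀ i, ‖∫ x in (y i)..(y (i+1)), ce (p.eval x)‖
          ≤ 1/δ + (volume (B ∩ Ioc (y i) (y (i+1)))).toReal := by
        intro i
        rcases eq_or_lt_of_le (hymono (Nat.le_succ i)) with heq | hlt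
        · rw [← heq, intervalIntegral.integral_same]
          simp only [norm_zero]
          positivity
        · have hIccsub : Icc (y i) (y (i+1)) ⊆ Icc (0:ℝ) 1 :=
            Icc_subset_Icc (hy01 i).1 (hy01 (i+1)).2
          have hqsub_ne : ∀ x ∈ Ioo (y i) (y (i+1)), q.eval x - δ ≠ 0 := by
            intro x hx h
            apply hyroot i x hx
            rw [hSdef]
            simp only [eval_mul, eval_sub, eval_add, eval_C]
            rw [h]; ring
          have hqadd_ne : ∀ x ∈ Ioo (y i) (y (i+1)), q.eval x + δ ≠ 0 := by
            intro x hx h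
            apply hyroot i x hx
            rw [hSdef]
            simp only [eval_mul, eval_sub, eval_add, eval_C]
            rw [h]; ring
          have hr_ne : ∀ x ∈ Ioo (y i) (y (i+1)), r.eval x ≠ 0 := by
            intro x hx h
            apply hyroot i x hx
            rw [hSdef]
            simp only [eval_mul, eval_sub, eval_add, eval_C]
            rw [h]; ring
          have hsign_r := sign_const r.continuous hlt hr_ne
          have h2 : (∀ x ∈ Icc (y i) (y (i+1)), 0 ≤ p.derivative.derivative.eval x)
              ∨ (∀ x ∈ Icc (y i) (y (i+1)), p.derivative.derivative.eval x ≤ 0) := by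
            rcases hsign_r with h | h
            · left
              exact ge_of_Ioo r.continuous hlt (fun t ht => le_of_lt (h t ht))
            · right
              exact le_of_Ioo r.continuous hlt (fun t ht => le_of_lt (h t ht))
          have hgoodcase : (∀ x ∈ Icc (y i) (y (i+1)), δ ≤ |q.eval x|) →
              ‖∫ x in (y i)..(y (i+1)), ce (p.eval x)‖
                ≤ 1/δ + (volume (B ∩ Ioc (y i) (y (i+1)))).toReal := by
            intro h1
            have := osc_bound p (y i) (y (i+1)) δ (le_of_lt hlt) hδpos h1 h2
            have hnn : (0:ℝ) ≤ (volume (B ∩ Ioc (y i) (y (i+1)))).toReal := ENNReal.toReal_nonneg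
            linarith
          rcases sign_const ((q.continuous).sub continuous_const) hlt hqsub_ne with hqpos | hqneg
          · -- q > δ
            apply hgoodcase
            intro x hx
            have := ge_of_Ioo ((q.continuous).sub continuous_const) hlt
              (fun t ht => le_of_lt (hqpos t ht)) x hx
            change 0 ≤ q.eval x - δ at this
            have h3 : δ ≤ q.eval x := by linarith [this]
            exact le_trans h3 (le_abs_self _)
          · rcases sign_const ((q.continuous).add continuous_const) hlt hqadd_ne with hqpos2 | hqneg2
            · -- bad interval: |q| < δ on Ioo
              have hIooB : Ioo (y i) (y (i+1)) ⊆ B ∩ Ioc (y i) (y (i+1)) := by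
                intro x hx
                refine ⟨⟨hIccsub (Ioo_subset_Icc_self hx), ?_⟩, hx.1, le_of_lt hx.2⟩
                have ha := hqneg x hx
                have hb := hqpos2 x hx
                change q.eval x - δ < 0 at ha
                change 0 < q.eval x + δ at hb
                rw [abs_le]
                constructor <;> linarith
              have hlen : ‖∫ x in (y i)..(y (i+1)), ce (p.eval x)‖ ≤ y (i+1) - y i := by
                have := intervalIntegral.norm_integral_le_of_norm_le_const
                  (C := 1) (f := fun x => ce (p.eval x)) (a := y i) (b := y (i+1))
                  (fun x _ => le_of_eq (ce_norm _))
                rwa [one_mul, abs_of_pos (by linarith : (0:ℝ) < y (i+1) - y i)] at this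
              have hvol : y (i+1) - y i ≤ (volume (B ∩ Ioc (y i) (y (i+1)))).toReal := by
                have h1 : volume (Ioo (y i) (y (i+1))) ≤ volume (B ∩ Ioc (y i) (y (i+1))) :=
                  measure_mono hIooB
                have h2 : volume (B ∩ Ioc (y i) (y (i+1))) ≠ ⊤ :=
                  ne_top_of_le_ne_top hBfin (measure_mono inter_subset_left)
                have := ENNReal.toReal_mono h2 h1
                rwa [Real.volume_Ioo, ENNReal.toReal_ofReal (by linarith)] at this
              have hδnn : (0:ℝ) ≤ 1/δ := by positivity
              linarith
            · -- q < -δ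
              apply hgoodcase
              intro x hx
              have := le_of_Ioo ((q.continuous).add continuous_const) hlt
                (fun t ht => le_of_lt (hqneg2 t ht)) x hx
              change q.eval x + δ ≤ 0 at this
              have h3 : q.eval x ≤ -δ := by linarith [this]
              rw [le_abs]
              right
              linarith
      -- sum up
      have hsplit : ∫ x in (0:ℝ)..1, ce (p.eval x)
          = ∑ i ∈ Finset.range (K-1), ∫ x in (y i)..(y (i+1)), ce (p.eval x) := by
        rw [intervalIntegral.sum_integral_adjacent_intervals (fun k _ => hint _ _)]
        rw [hy0, hylast]
      have hvolsum : ∑ i ∈ Finset.range (K-1), (volume (B ∩ Ioc (y i) (y (i+1)))).toReal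
          ≤ (volume B).toReal := by
        have hfin : ∀ i ∈ Finset.range (K-1), volume (B ∩ Ioc (y i) (y (i+1))) ≠ ⊤ :=
          fun i _ => ne_top_of_le_ne_top hBfin (measure_mono inter_subset_left)
        rw [← ENNReal.toReal_sum hfin, sum_vol_Ioc B hBmeas y hymono (K-1)]
        exact ENNReal.toReal_mono hBfin (measure_mono inter_subset_left)
      have hsum : ‖∫ x in (0:ℝ)..1, ce (p.eval x)‖
          ≤ (3*(d:ℝ)+2) * (1/δ) + (volume B).toReal := by
        rw [hsplit]
        calc ‖∑ i ∈ Finset.range (K-1), ∫ x in (y i)..(y (i+1)), ce (p.eval x)‖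
            ≤ ∑ i ∈ Finset.range (K-1), ‖∫ x in (y i)..(y (i+1)), ce (p.eval x)‖ :=
              norm_sum_le _ _
          _ ≤ ∑ i ∈ Finset.range (K-1), (1/δ + (volume (B ∩ Ioc (y i) (y (i+1)))).toReal) :=
              Finset.sum_le_sum (fun i _ => hper i)
          _ = (K-1 : ℕ) * (1/δ) + ∑ i ∈ Finset.range (K-1), (volume (B ∩ Ioc (y i) (y (i+1)))).toReal := by
              rw [Finset.sum_add_distrib, Finset.sum_const, Finset.card_range, nsmul_eq_mul]
          _ ≤ (3*(d:ℝ)+2) * (1/δ) + (volume B).toReal := by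
              have hKr : ((K-1 : ℕ) : ℝ) ≤ 3*(d:ℝ)+2 := by
                have : (K-1 : ℕ) ≤ 3*d+2 := by omega
                calc ((K-1:ℕ):ℝ) ≤ ((3*d+2 : ℕ):ℝ) := by exact_mod_cast this
                  _ = 3*(d:ℝ)+2 := by push_cast; ring
              have hδnn : (0:ℝ) ≤ 1/δ := by positivity
              have := mul_le_mul_of_nonneg_right hKr hδnn
              linarith [hvolsum]
      -- sublevel bound on volume B
      have hvolB : (volume B).toReal ≤ C₁ * |c| ^ (-(1/(d:ℝ))) := by
        have happ := hsub q (by rw [hn₁]; exact hqd) mm hqc0 δ (le_of_lt hδpos)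
        rw [← hBdef] at happ
        have hstep1 : δ / |q.coeff mm| ≤ δ / |c| :=
          div_le_div_of_nonneg_left (le_of_lt hδpos) hcabs hqcge
        have hstep2 : (δ / |q.coeff mm|) ^ (1/((max (d-1) 1 : ℕ):ℝ))
            ≤ (δ / |c|) ^ (1/((max (d-1) 1 : ℕ):ℝ)) :=
          Real.rpow_le_rpow (by positivity) hstep1 (by positivity)
        have hd1cast : ((max (d-1) 1 : ℕ):ℝ) = (d:ℝ) - 1 := by
          rw [hn₁]
          have : ((d-1 : ℕ):ℝ) = (d:ℝ) - 1 := by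
            rw [Nat.cast_sub hd]; norm_num
          exact this
        have hstep3 : (δ / |c|) ^ (1/((max (d-1) 1 : ℕ):ℝ)) = |c| ^ (-(1/(d:ℝ))) := by
          rw [hd1cast]
          have hdc : δ / |c| = |c| ^ ((1/(d:ℝ)) - 1) := by
            rw [Real.rpow_sub hcabs, Real.rpow_one, hδdef]
          rw [hdc, ← Real.rpow_mul (abs_nonneg c)]
          congr 1
          have hd0' : (d:ℝ) ≠ 0 := ne_of_gt hd0
          have hd1' : (d:ℝ) - 1 ≠ 0 := by
            have : (2:ℝ) ≤ d := by exact_mod_cast hd2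
            linarith
          field_simp
          ring
        calc (volume B).toReal
            ≤ C₁ * (δ / |q.coeff mm|) ^ (1/((max (d-1) 1 : ℕ):ℝ)) := happ
          _ ≤ C₁ * (δ / |c|) ^ (1/((max (d-1) 1 : ℕ):ℝ)) :=
              mul_le_mul_of_nonneg_left hstep2 (le_of_lt hC₁)
          _ = C₁ * |c| ^ (-(1/(d:ℝ))) := by rw [hstep3]
      -- final combination
      rw [hδinv] at hsum
      have hcombine : (3*(d:ℝ)+2) * (|c| ^ (-(1/(d:ℝ)))) + C₁ * (|c| ^ (-(1/(d:ℝ))))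
          ≤ (C₁ + (3*(d:ℝ) + 3) + 1) * (|c| ^ (-(1/(d:ℝ)))) := by
        have heq : (3*(d:ℝ)+2) * (|c| ^ (-(1/(d:ℝ)))) + C₁ * (|c| ^ (-(1/(d:ℝ))))
            = ((3*(d:ℝ)+2) + C₁) * (|c| ^ (-(1/(d:ℝ)))) := by ring
        rw [heq]
        apply mul_le_mul_of_nonneg_right _ (le_of_lt hrpos)
        linarith
      linarith [hvolB, hsum, hcombine]

/-- Van der Corput bound for the oscillatory integral `(1/N) ∫_0^N e(β₁x + ⋯ + β_d x^d) dx`: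
for each `1 ≤ j ≤ d` (here `j : Fin d` encodes the exponent `j+1`) it is bounded by
`C(j,d) |β_j|^{-1/d} N^{-j/d}`. -/
theorem oscillatory_integral_curve_bound (d : ℕ) (hd : 1 ≤ d) (j : Fin d) :
    ∃ C : ℝ, ∀ β : Fin d → ℝ, β j ≠ 0 → ∀ N : ℝ, 0 < N →
      ‖(N : ℂ)⁻¹ * ∫ x in (0 : ℝ)..N, ce (∑ i, β i * x ^ ((i : ℕ) + 1))‖
        ≤ C * |β j| ^ (-(1 / d : ℝ)) * N ^ (-(((j : ℕ) + 1 : ℝ) / d)) := by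
  classical
  obtain ⟨C, hCpos, hcore⟩ := core_bound d hd
  refine ⟨C, ?_⟩
  intro β hβ N hN
  set f : ℝ → ℂ := fun x => ce (∑ i, β i * x ^ ((i : ℕ) + 1)) with hf
  set p : ℝ[X] := ∑ i : Fin d, Polynomial.C (β i * N^((i:ℕ)+1)) * X^((i:ℕ)+1) with hp
  have hcoeff : ∀ k : Fin d, p.coeff ((k:ℕ)+1) = β k * N^((k:ℕ)+1) := by
    intro k
    rw [hp, finset_sum_coeff]
    rw [Finset.sum_eq_single k]
    · rw [coeff_C_mul, coeff_X_pow, if_pos rfl, mul_one]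
    · intro i _ hik
      rw [coeff_C_mul, coeff_X_pow, if_neg, mul_zero]
      intro h
      exact hik (Fin.ext (by omega))
    · intro h; exact absurd (Finset.mem_univ k) h
  have hdeg : p.natDegree ≤ d := by
    rw [hp]
    apply Polynomial.natDegree_sum_le_of_forall_le
    intro i _
    apply le_trans (natDegree_C_mul_le _ _)
    rw [natDegree_X_pow]
    exact i.2
  have hcne : p.coeff ((j:ℕ)+1) ≠ 0 := by
    rw [hcoeff j]
    exact mul_ne_zero hβ (by positivity)
  have heval : ∀ x : ℝ, f (N * x) = ce (p.eval x) := by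
    intro x
    have harg : (∑ i, β i * (N * x) ^ ((i:ℕ)+1)) = p.eval x := by
      rw [hp, Polynomial.eval_finset_sum]
      apply Finset.sum_congr rfl
      intro i _
      rw [eval_mul, eval_C, eval_pow, eval_X, mul_pow]
      ring
    show ce (∑ i, β i * (N * x) ^ ((i:ℕ)+1)) = ce (p.eval x)
    rw [harg]
  have hsubst : ∫ x in (0:ℝ)..1, f (N * x) = N⁻¹ • ∫ x in (0:ℝ)..N, f x := by
    have := intervalIntegral.integral_comp_mul_left f (ne_of_gt hN) (a := 0) (b := 1)
    simpa using this
  have hlhs : ‖(N : ℂ)⁻¹ * ∫ x in (0 : ℝ)..N, f x‖ = ‖∫ x in (0:ℝ)..1, ce (p.eval x)‖ := by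
    rw [show (∫ x in (0:ℝ)..1, ce (p.eval x)) = ∫ x in (0:ℝ)..1, f (N * x) by
      apply intervalIntegral.integral_congr
      intro x _
      exact (heval x).symm]
    rw [hsubst, Complex.real_smul, Complex.ofReal_inv]
  rw [hlhs]
  have happ := hcore p hdeg ((j:ℕ)+1) (by omega) (by have := j.2; omega) hcne
  rw [hcoeff j] at happ
  refine happ.trans (le_of_eq ?_)
  rw [abs_mul, abs_of_pos (by positivity : (0:ℝ) < N^((j:ℕ)+1))]
  rw [Real.mul_rpow (abs_nonneg _) (by positivity)]
  rw [mul_assoc]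
  congr 1
  congr 1
  rw [← Real.rpow_natCast N ((j:ℕ)+1), ← Real.rpow_mul (le_of_lt hN)]
  congr 1
  push_cast
  ring
end
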